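/- arXiv:2405.16576 — 5 statements merged into one kernel-verified Lean document; each statement's English description precedes it below -/
import Mathlib

section
/- For every x in the interval [2/3, 1], there exists a sequence (α_n) with each α_n ∈ {0, 2, 3, 5} such that x = ∑_{n=1}^∞ α_n / 4^n. Equivalently, the interval [2/3, 1] is contained in the Guthrie-Nymann set X. -/
/-- The Guthrie-Nymann set. -/
def GN : Set ℝ :=
  {x | ∃ α : ℕ → ℝ, (∀ n, α n ∈ ({0, 2, 3, 5} : Set ℝ)) ∧
    HasSum (fun n => α n / 4 ^ (n + 1)) x}

/-! ### Auxiliary material -/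

noncomputable def GNdig : Fin 4 → ℝ := ![0, 2, 3, 5]

noncomputable def GNPhi (ω : ℕ → Fin 4) : ℝ := ∑' n, GNdig (ω n) / 4 ^ (n + 1)

lemma GNdig_mem (j : Fin 4) : GNdig j ∈ ({0, 2, 3, 5} : Set ℝ) := by
  fin_cases j <;> simp [GNdig]

lemma GNdig_bound (j : Fin 4) : ‖GNdig j‖ ≤ 5 := by
  fin_cases j <;> simp [GNdig] <;> norm_num

lemma GNsummable_bound : Summable (fun n : ℕ => (5 : ℝ) / 4 ^ (n + 1)) := by
  have h : Summable (fun n : ℕ => (5 / 4 : ℝ) * (1 / 4) ^ n) :=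
    (summable_geometric_of_lt_one (by norm_num) (by norm_num)).mul_left _
  have h2 : (fun n : ℕ => (5 / 4 : ℝ) * (1 / 4) ^ n) = fun n : ℕ => (5 : ℝ) / 4 ^ (n + 1) := by
    funext n
    have hp : ((1:ℝ)/4) ^ n = 1 / 4 ^ n := by rw [div_pow, one_pow]
    rw [pow_succ, hp]
    field_simp
  rwa [h2] at h

lemma GNsummable (ω : ℕ → Fin 4) :
    Summable (fun n => GNdig (ω n) / 4 ^ (n + 1)) := by
  apply Summable.of_norm_bounded GNsummable_bound
  intro n
  rw [norm_div]
  have h4 : (0:ℝ) < 4 ^ (n+1) := by positivity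
  rw [show ‖(4:ℝ) ^ (n+1)‖ = 4 ^ (n+1) by
    simp [Real.norm_eq_abs, abs_of_pos h4]]
  exact div_le_div_of_nonneg_right (GNdig_bound _) h4.le |>.trans_eq rfl

lemma GNPhi_mem (ω : ℕ → Fin 4) : GNPhi ω ∈ GN :=
  ⟨fun n => GNdig (ω n), fun n => GNdig_mem _, (GNsummable ω).hasSum⟩

lemma GNPhi_continuous : Continuous GNPhi := by
  apply continuous_tsum (u := fun n : ℕ => (5:ℝ) / 4 ^ (n + 1))
  · intro n
    exact ((continuous_of_discreteTopology).comp (continuous_apply n)).div_const _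
  · exact GNsummable_bound
  · intro n ω
    rw [norm_div]
    have h4 : (0:ℝ) < 4 ^ (n+1) := by positivity
    rw [show ‖(4:ℝ) ^ (n+1)‖ = 4 ^ (n+1) by
      simp [Real.norm_eq_abs, abs_of_pos h4]]
    exact div_le_div_of_nonneg_right (GNdig_bound _) h4.le |>.trans_eq rfl

lemma GNclosed : IsClosed (Set.range GNPhi) :=
  (isCompact_range GNPhi_continuous).isClosed

/-- Every integer in `[(2·4^k-2)/3, 4^k)` is a `k`-digit value over `{0,2,3,5}`. -/
lemma GNdigits : ∀ (k n : ℕ), 2 * 4 ^ k ≤ 3 * n + 2 → n < 4 ^ k →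
    ∃ e : ℕ → ℕ, (∀ i, e i = 0 ∨ e i = 2 ∨ e i = 3 ∨ e i = 5) ∧
      n = ∑ i ∈ Finset.range k, e i * 4 ^ i := by
  intro k
  induction k with
  | zero =>
    intro n _ h2
    have hn : n = 0 := by simpa using Nat.lt_one_iff.mp (by simpa using h2)
    exact ⟨fun _ => 0, fun _ => Or.inl rfl, by simp [hn]⟩
  | succ k IH =>
    intro n h1 h2
    have hm1 : 0 < 4 ^ k := pow_pos (by norm_num) k
    have hm3 : 4 ^ k % 3 = 1 := by simp [Nat.pow_mod]
    rw [pow_succ] at h1 h2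
    have step : ∀ (d n' : ℕ), (d = 0 ∨ d = 2 ∨ d = 3 ∨ d = 5) → n = 4 * n' + d →
        2 * 4 ^ k ≤ 3 * n' + 2 → n' < 4 ^ k →
        ∃ e : ℕ → ℕ, (∀ i, e i = 0 ∨ e i = 2 ∨ e i = 3 ∨ e i = 5) ∧
          n = ∑ i ∈ Finset.range (k + 1), e i * 4 ^ i := by
      intro d n' hd hn hc1 hc2
      obtain ⟨e', he', hs⟩ := IH n' hc1 hc2
      refine ⟨fun i => if i = 0 then d else e' (i - 1), fun i => ?_, ?_⟩
      · rcases i with _ | i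
        · simpa using hd
        · simpa using he' i
      · rw [Finset.sum_range_succ']
        simp only [Nat.succ_ne_zero, if_false, if_true, Nat.add_sub_cancel, pow_zero,
          mul_one]
        have hsum4 : ∑ i ∈ Finset.range k, e' i * 4 ^ (i + 1)
            = 4 * ∑ i ∈ Finset.range k, e' i * 4 ^ i := by
          rw [Finset.mul_sum]
          exact Finset.sum_congr rfl fun i _ => by ring
        rw [hsum4, ← hs]
        omega
    have hr : n % 4 = 0 ∨ n % 4 = 1 ∨ n % 4 = 2 ∨ n % 4 = 3 := by omega
    rcases hr with h | h | h | h
    · exact step 0 (n / 4) (Or.inl rfl) (by omega) (by omega) (by omega)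
    · exact step 5 ((n - 5) / 4) (by tauto) (by omega) (by omega) (by omega)
    · exact step 2 ((n - 2) / 4) (by tauto) (by omega) (by omega) (by omega)
    · exact step 3 ((n - 3) / 4) (by tauto) (by omega) (by omega) (by omega)

def GNenc : ℕ → Fin 4 := fun m => if m = 0 then 0 else if m = 2 then 1 else if m = 3 then 2 else 3

lemma GNenc_dig {m : ℕ} (hm : m = 0 ∨ m = 2 ∨ m = 3 ∨ m = 5) :
    GNdig (GNenc m) = m := by
  rcases hm with h | h | h | h <;> subst h <;> simp [GNenc, GNdig]

lemma GNgeom (k : ℕ) : ∑ j ∈ Finset.range k, (2:ℝ) / 4 ^ (j+1) = 2/3 - 2/3 / 4 ^ k := by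
  induction k with
  | zero => norm_num
  | succ k IH =>
    rw [Finset.sum_range_succ, IH]
    have h4 : (4:ℝ) ^ k ≠ 0 := by positivity
    field_simp
    ring

/-- Value of `GNPhi` on the word given by digits `e` (big-endian) followed by all 2's. -/
lemma GNPhi_eval (k : ℕ) (e : ℕ → ℕ)
    (he : ∀ i, e i = 0 ∨ e i = 2 ∨ e i = 3 ∨ e i = 5) :
    ∃ ω : ℕ → Fin 4,
      GNPhi ω = ((∑ i ∈ Finset.range k, e i * 4 ^ i : ℕ) : ℝ) / 4 ^ k + 2/3 / 4 ^ k := by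
  classical
  set M : ℕ := ∑ i ∈ Finset.range k, e i * 4 ^ i with hM
  refine ⟨fun j => if j < k then GNenc (e (k - 1 - j)) else 1, ?_⟩
  set ω : ℕ → Fin 4 := fun j => if j < k then GNenc (e (k - 1 - j)) else 1 with hω
  have h4k : (4:ℝ) ^ k ≠ 0 := by positivity
  -- the tail part
  have hh : HasSum (fun j : ℕ => (2:ℝ) / 4 ^ (j+1)) (2/3) := by
    have h : HasSum (fun j : ℕ => (1/2 : ℝ) * (1/4) ^ j) ((1/2) * (1 - 1/4)⁻¹) :=
      (hasSum_geometric_of_lt_one (by norm_num) (by norm_num)).mul_left _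
    have h2 : (fun j : ℕ => (1/2 : ℝ) * (1/4) ^ j) = fun j : ℕ => (2:ℝ) / 4 ^ (j+1) := by
      funext j
      have hp : ((1:ℝ)/4) ^ j = 1 / 4 ^ j := by rw [div_pow, one_pow]
      rw [pow_succ, hp]
      field_simp
      ring
    have h3 : (1/2 : ℝ) * (1 - 1/4)⁻¹ = 2/3 := by norm_num
    rwa [h2, h3] at h
  -- the finitely supported part
  set g : ℕ → ℝ := fun j => GNdig (ω j) / 4 ^ (j+1) - 2 / 4 ^ (j+1) with hg
  have hg0 : ∀ j ∉ Finset.range k, g j = 0 := by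
    intro j hj
    rw [Finset.mem_range] at hj
    have : ω j = 1 := by simp [hω, if_neg hj]
    simp [hg, this, GNdig]
  have hgsum : HasSum g (∑ j ∈ Finset.range k, g j) :=
    hasSum_sum_of_ne_finset_zero hg0
  have hf : HasSum (fun j => GNdig (ω j) / 4 ^ (j+1))
      ((∑ j ∈ Finset.range k, g j) + 2/3) := by
    have := hgsum.add hh
    convert this using 2 with j
    simp [hg]
  rw [GNPhi, hf.tsum_eq]
  -- evaluate the finite sum
  have hgeval : ∀ j ∈ Finset.range k,
      g j = (e (k - 1 - j) : ℝ) / 4 ^ (j+1) - 2 / 4 ^ (j+1) := by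
    intro j hj
    rw [Finset.mem_range] at hj
    have : ω j = GNenc (e (k - 1 - j)) := by simp [hω, if_pos hj]
    rw [hg]
    simp only [this, GNenc_dig (he _)]
  rw [Finset.sum_congr rfl hgeval, Finset.sum_sub_distrib, GNgeom k]
  have hA : ∑ j ∈ Finset.range k, (e (k - 1 - j) : ℝ) / 4 ^ (j+1) = (M : ℝ) / 4 ^ k := by
    rw [eq_div_iff h4k, Finset.sum_mul]
    have hterm : ∀ j ∈ Finset.range k,
        (e (k - 1 - j) : ℝ) / 4 ^ (j+1) * 4 ^ k
          = (e (k - 1 - j) : ℝ) * 4 ^ (k - 1 - j) := by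
      intro j hj
      rw [Finset.mem_range] at hj
      have hpow : (4:ℝ) ^ (k - 1 - j) * 4 ^ (j+1) = 4 ^ k := by
        rw [← pow_add]
        congr 1
        omega
      have h41 : (4:ℝ) ^ (j+1) ≠ 0 := by positivity
      field_simp
      rw [← hpow]
      ring
    rw [Finset.sum_congr rfl hterm,
      Finset.sum_range_reflect (fun i => (e i : ℝ) * 4 ^ i) k, hM]
    push_cast
    ring
  rw [hA]
  ring

theorem Icc_subset_GN : Set.Icc (2 / 3 : ℝ) 1 ⊆ GN := by
  intro x hx
  obtain ⟨hx1, hx2⟩ := hx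
  have hsub : Set.range GNPhi ⊆ GN := by
    rintro y ⟨ω, rfl⟩
    exact GNPhi_mem ω
  apply hsub
  rw [← GNclosed.closure_eq]
  rw [Metric.mem_closure_iff]
  intro ε hε
  obtain ⟨k, hk⟩ : ∃ k : ℕ, (1/4 : ℝ) ^ k < ε :=
    exists_pow_lt_of_lt_one hε (by norm_num)
  have h4pos : (0:ℝ) < 4 ^ k := by positivity
  set c : ℝ := 4 ^ k * x with hc
  -- the integer approximant
  set K : ℤ := ⌈c⌉ - 1 with hK
  have hcK1 : (K : ℝ) < c := by
    have := Int.ceil_lt_add_one c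
    push_cast [hK]
    linarith
  have hcK2 : c ≤ (K : ℝ) + 1 := by
    have := Int.le_ceil c
    push_cast [hK]
    linarith
  -- lower bound: K ≥ L with 3L = 2·4^k - 2
  have hdvd : (4:ℕ) ^ k % 3 = 1 := by simp [Nat.pow_mod]
  have hm1 : 0 < (4:ℕ) ^ k := pow_pos (by norm_num) k
  set L : ℕ := (2 * 4 ^ k - 2) / 3 with hL
  have h3L : 3 * L = 2 * 4 ^ k - 2 := by omega
  have hLR : 3 * (L:ℝ) = 2 * (4:ℝ) ^ k - 2 := by
    have : ((3 * L : ℕ) : ℝ) = ((2 * 4 ^ k - 2 : ℕ) : ℝ) := by rw [h3L]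
    push_cast [Nat.cast_sub (by omega : 2 ≤ 2 * 4 ^ k)] at this
    push_cast
    linarith
  have hcL : (L : ℝ) < c := by
    have h1 : c ≥ 4 ^ k * (2/3) := by
      rw [hc]
      nlinarith
    nlinarith
  have hKL : (L : ℤ) ≤ K := by
    have : (L : ℤ) < ⌈c⌉ := by
      rw [Int.lt_ceil]
      exact_mod_cast hcL
    omega
  have hKub : K ≤ (4:ℤ) ^ k - 1 := by
    have : ⌈c⌉ ≤ (4:ℤ) ^ k := by
      rw [Int.ceil_le]
      push_cast
      nlinarith
    omega
  -- pass to ℕ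
  set M : ℕ := K.toNat with hMdef
  have hK0 : (0:ℤ) ≤ K := le_trans (Int.natCast_nonneg L) hKL
  have hKM : (M : ℤ) = K := Int.toNat_of_nonneg hK0
  have hLM : L ≤ M := by
    have h := hKL
    rw [← hKM] at h
    exact_mod_cast h
  have hMlb : 2 * 4 ^ k ≤ 3 * M + 2 := by omega
  have hMub : M < 4 ^ k := by
    have h : (M : ℤ) ≤ (4:ℤ) ^ k - 1 := by rw [hKM]; exact hKub
    have h4 : ((4 ^ k : ℕ) : ℤ) = (4:ℤ) ^ k := by push_cast; rfl
    omega
  obtain ⟨e, he, hsum⟩ := GNdigits k M hMlb hMub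
  obtain ⟨ω, hωeval⟩ := GNPhi_eval k e he
  refine ⟨GNPhi ω, ⟨ω, rfl⟩, ?_⟩
  rw [Real.dist_eq, hωeval, ← hsum]
  have hMc : (M : ℝ) < c := by
    have : ((M:ℤ) : ℝ) = ((K:ℤ) : ℝ) := by exact_mod_cast hKM
    push_cast at this
    rw [this]
    exact hcK1
  have hMc2 : c ≤ (M : ℝ) + 1 := by
    have : ((M:ℤ) : ℝ) = ((K:ℤ) : ℝ) := by exact_mod_cast hKM
    push_cast at this
    rw [this]
    exact hcK2
  have h14 : (1/4 : ℝ) ^ k * 4 ^ k = 1 := by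
    rw [div_pow, one_pow, div_mul_cancel₀]
    positivity
  have habs : |x - ((M:ℝ) / 4 ^ k + 2/3 / 4 ^ k)| ≤ (2/3) * (1/4) ^ k := by
    have hinv : ((4:ℝ) ^ k)⁻¹ = (1/4 : ℝ) ^ k := by
      rw [one_div, inv_pow]
    have key : x - ((M:ℝ) / 4 ^ k + 2/3 / 4 ^ k)
        = (c - (M:ℝ) - 2/3) * ((4:ℝ) ^ k)⁻¹ := by
      rw [hc]
      field_simp
      ring
    rw [key, abs_mul, abs_of_pos (inv_pos.mpr h4pos), hinv]
    apply mul_le_mul_of_nonneg_right _ (by positivity)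
    rw [abs_le]
    constructor <;> linarith
  calc |x - ((M:ℝ) / 4 ^ k + 2/3 / 4 ^ k)| ≤ (2/3) * (1/4) ^ k := habs
    _ < (1/4) ^ k := by nlinarith [pow_pos (show (0:ℝ) < 1/4 by norm_num) k]
    _ < ε := hk
end

section
/- The Guthrie-Nymann set X has Lebesgue measure 1. -/
open MeasureTheory

lemma geom_hasSum : HasSum (fun n : ℕ => (5:ℝ) / 4 ^ (n + 1)) (5/3) := by
  have h : HasSum (fun n : ℕ => (1/4:ℝ) ^ n) (4/3) := by
    have := hasSum_geometric_of_lt_one (by norm_num : (0:ℝ) ≤ 1/4) (by norm_num : (1/4:ℝ) < 1)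
    convert this using 1; norm_num
  have h2 := h.mul_left (5/4)
  have : (fun n : ℕ => (5/4:ℝ) * (1/4)^n) = fun n : ℕ => (5:ℝ) / 4 ^ (n + 1) := by
    funext n; rw [one_div, inv_pow, pow_succ]; field_simp
  rw [this] at h2
  rw [show (5/3:ℝ) = 5/4*(4/3) by norm_num]; exact h2

lemma GN_subset : GN ⊆ Set.Icc 0 (5/3) := by
  rintro x ⟨α, hα, hsum⟩
  have hlb : ∀ n, (0:ℝ) ≤ α n := fun n => by rcases hα n with h|h|h|h <;> simp_all <;> norm_num
  have hub : ∀ n, α n ≤ 5 := fun n => by rcases hα n with h|h|h|h <;> simp_all <;> norm_num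
  constructor
  · exact hasSum_le (fun n => div_nonneg (hlb n) (by positivity)) hasSum_zero hsum
  · exact hasSum_le (fun n => by gcongr; exact hub n) hsum geom_hasSum

lemma GN_digit {d : ℝ} (hd : d ∈ ({0, 2, 3, 5} : Set ℝ)) {x : ℝ} (hx : x ∈ GN) :
    (x + d) / 4 ∈ GN := by
  obtain ⟨α, hα, hsum⟩ := hx
  refine ⟨fun n => match n with | 0 => d | k+1 => α k,
    fun n => by cases n <;> simp [hd, hα], ?_⟩
  rw [← hasSum_nat_add_iff' 1]
  simp only [Finset.range_one, Finset.sum_singleton]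
  show HasSum (fun n : ℕ => α n / 4 ^ (n + 1 + 1)) ((x + d)/4 - d / 4 ^ (0+1))
  have he : (fun n : ℕ => (α n) / 4 ^ (n + 1 + 1)) = fun n => (α n / 4 ^ (n+1)) / 4 := by
    funext n; rw [pow_succ]; ring
  rw [he]
  rw [show (x + d)/4 - d/4^(0+1) = x/4 by ring]
  exact hsum.div_const 4

lemma GN_decomp {x : ℝ} (hx : x ∈ GN) :
    ∃ d ∈ ({0, 2, 3, 5} : Set ℝ), ∃ y ∈ GN, x = (y + d) / 4 := by
  obtain ⟨α, hα, hsum⟩ := hx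
  refine ⟨α 0, hα 0, 4 * x - α 0, ⟨fun n => α (n+1), fun n => hα (n+1), ?_⟩, by ring⟩
  have h := (hasSum_nat_add_iff' (f := fun n => α n / 4 ^ (n+1)) 1).2 hsum
  simp only [Finset.range_one, Finset.sum_singleton] at h
  have h2 := h.mul_right 4
  show HasSum (fun n => α (n+1) / 4^(n+1)) (4*x - α 0)
  have e1 : (fun n => α (n+1) / 4^(n+1)) = fun i => α (i + 1) / 4 ^ (i + 1 + 1) * 4 := by
    funext n
    rw [pow_succ]
    ring
  rw [e1, show 4 * x - α 0 = (x - α 0 / 4 ^ (0 + 1)) * 4 by ring]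
  exact h2

lemma GN_symm {x : ℝ} (hx : x ∈ GN) : 5/3 - x ∈ GN := by
  obtain ⟨α, hα, hsum⟩ := hx
  refine ⟨fun n => 5 - α n, fun n => ?_, ?_⟩
  · rcases hα n with h|h|h|h <;> simp_all <;> norm_num
  · have := geom_hasSum.sub hsum
    show HasSum (fun n => (5 - α n) / 4^(n+1)) (5/3 - x)
    have e : (fun n => (5 - α n) / 4^(n+1)) = fun b => 5 / 4 ^ (b + 1) - α b / 4 ^ (b + 1) := by
      funext n; ring
    rw [e]; exact this

lemma GN_zero : (0:ℝ) ∈ GN :=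
  ⟨fun _ => 0, fun _ => by simp, by simpa using hasSum_zero⟩

noncomputable def digmap : Fin 4 → ℝ := ![0, 2, 3, 5]

lemma digmap_mem (i : Fin 4) : digmap i ∈ ({0, 2, 3, 5} : Set ℝ) := by
  fin_cases i <;> simp [digmap]

noncomputable def phi (b : ℕ → Fin 4) : ℝ := ∑' n, digmap (b n) / 4 ^ (n + 1)

lemma digmap_bound (i : Fin 4) : |digmap i| ≤ 5 := by
  fin_cases i <;> simp [digmap] <;> norm_num

lemma phi_summable (b : ℕ → Fin 4) : Summable (fun n => digmap (b n) / 4 ^ (n + 1)) := by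
  apply Summable.of_norm_bounded geom_hasSum.summable
  intro n
  rw [Real.norm_eq_abs, abs_div, abs_of_nonneg (by positivity : (0:ℝ) ≤ 4 ^ (n+1))]
  gcongr
  exact digmap_bound (b n)

lemma GN_eq_range : GN = Set.range phi := by
  ext x
  constructor
  · rintro ⟨α, hα, hsum⟩
    refine ⟨fun n => if α n = 0 then 0 else if α n = 2 then 1 else if α n = 3 then 2 else 3, ?_⟩
    have : ∀ n, digmap (if α n = 0 then (0:Fin 4) else if α n = 2 then 1 else if α n = 3 then 2 else 3) = α n := by
      intro n
      rcases hα n with h|h|h|h <;> simp_all [digmap] <;> norm_num [digmap]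
    unfold phi
    simp_rw [this]
    exact hsum.tsum_eq
  · rintro ⟨b, rfl⟩
    exact ⟨fun n => digmap (b n), fun n => digmap_mem (b n), (phi_summable b).hasSum⟩

lemma phi_continuous : Continuous phi := by
  apply continuous_tsum (u := fun n => (5:ℝ) / 4 ^ (n+1))
  · intro n
    exact (Continuous.comp continuous_of_discreteTopology (continuous_apply n)).div_const _
  · exact geom_hasSum.summable
  · intro n b
    rw [Real.norm_eq_abs, abs_div, abs_of_nonneg (by positivity : (0:ℝ) ≤ 4 ^ (n+1))]
    gcongr
    exact digmap_bound (b n)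

lemma GN_isCompact : IsCompact GN := by
  rw [GN_eq_range, ← Set.image_univ]
  exact (isCompact_univ).image phi_continuous

lemma GN_isClosed : IsClosed GN := GN_isCompact.isClosed

lemma GN_measurable : MeasurableSet GN := GN_isClosed.measurableSet

lemma quarter {a b δ c e : ℝ} (h : |a - b| ≤ δ)
    (hc : 4*c - 4*e = a - b ∨ 4*c - 4*e = b - a) : |c - e| ≤ δ/4 := by
  have h4 : |c - e| = |4*c - 4*e| / 4 := by
    rw [show 4*c - 4*e = 4*(c-e) by ring, abs_mul]
    norm_num
  rcases hc with hc | hc <;> rw [h4, hc]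
  · linarith [h]
  · rw [abs_sub_comm]; linarith [h]

lemma GN_approx : ∀ n : ℕ,
    (∀ u : ℝ, 2/3 ≤ u → u ≤ 1 → ∃ x ∈ GN, |x - u| ≤ 5/3 * (1/4)^n) ∧
    (∀ t : ℝ, 0 ≤ t → t ≤ 2/3 →
      ∃ x ∈ GN, |x - t| ≤ 5/3 * (1/4)^n ∨ |x - (2/3 - t)| ≤ 5/3 * (1/4)^n) := by
  intro n
  induction n with
  | zero =>
    constructor
    · intro u h1 h2
      exact ⟨0, GN_zero, by rw [abs_sub_comm, abs_of_nonneg (by linarith)]; norm_num; linarith⟩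
    · intro t h1 h2
      exact ⟨0, GN_zero, Or.inl (by rw [abs_sub_comm, abs_of_nonneg (by linarith)]; norm_num; linarith)⟩
  | succ n ih =>
    obtain ⟨ihP, ihD⟩ := ih
    have hE : (5:ℝ)/3 * (1/4)^(n+1) = (5/3*(1/4)^n)/4 := by rw [pow_succ]; ring
    constructor
    · intro u h1 h2
      rcases le_or_gt u (3/4) with hc | hc
      · obtain ⟨x', hx', hb⟩ := ihP (4*u-2) (by linarith) (by linarith)
        exact ⟨(x'+2)/4, GN_digit (by norm_num) hx',
          by rw [hE]; exact quarter hb (Or.inl (by ring))⟩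
      rcases le_or_gt (11/12) u with hc2 | hc2
      · obtain ⟨x', hx', hb⟩ := ihP (4*u-3) (by linarith) (by linarith)
        exact ⟨(x'+3)/4, GN_digit (by norm_num) hx',
          by rw [hE]; exact quarter hb (Or.inl (by ring))⟩
      · obtain ⟨x', hx', hb⟩ := ihD (4*u-3) (by linarith) (by linarith)
        rcases hb with hb | hb
        · exact ⟨(x'+3)/4, GN_digit (by norm_num) hx',
            by rw [hE]; exact quarter hb (Or.inl (by ring))⟩
        · exact ⟨((5/3 - x')+2)/4, GN_digit (by norm_num) (GN_symm hx'),
            by rw [hE]; exact quarter hb (Or.inr (by ring))⟩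
    · intro t h1 h2
      rcases le_or_gt t (1/6) with hc | hc
      · obtain ⟨x', hx', hb⟩ := ihD (4*t) (by linarith) (by linarith)
        rcases hb with hb | hb
        · exact ⟨(x'+0)/4, GN_digit (by norm_num) hx',
            Or.inl (by rw [hE]; exact quarter hb (Or.inl (by ring)))⟩
        · exact ⟨(x'+2)/4, GN_digit (by norm_num) hx',
            Or.inr (by rw [hE]; exact quarter hb (Or.inl (by ring)))⟩
      rcases le_or_gt t (1/4) with hc2 | hc2
      · obtain ⟨x', hx', hb⟩ := ihP (4*t) (by linarith) (by linarith)
        exact ⟨(x'+0)/4, GN_digit (by norm_num) hx',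
          Or.inl (by rw [hE]; exact quarter hb (Or.inl (by ring)))⟩
      rcases le_or_gt t (5/12) with hc3 | hc3
      · obtain ⟨x', hx', hb⟩ := ihD (4*t-1) (by linarith) (by linarith)
        rcases hb with hb | hb
        · exact ⟨((5/3 - x')+0)/4, GN_digit (by norm_num) (GN_symm hx'),
            Or.inr (by rw [hE]; exact quarter hb (Or.inr (by ring)))⟩
        · exact ⟨((5/3 - x')+0)/4, GN_digit (by norm_num) (GN_symm hx'),
            Or.inl (by rw [hE]; exact quarter hb (Or.inr (by ring)))⟩
      rcases le_or_gt t (1/2) with hc4 | hc4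
      · obtain ⟨x', hx', hb⟩ := ihP (8/3-4*t) (by linarith) (by linarith)
        exact ⟨(x'+0)/4, GN_digit (by norm_num) hx',
          Or.inr (by rw [hE]; exact quarter hb (Or.inl (by ring)))⟩
      · obtain ⟨x', hx', hb⟩ := ihD (4*t-2) (by linarith) (by linarith)
        rcases hb with hb | hb
        · exact ⟨(x'+2)/4, GN_digit (by norm_num) hx',
            Or.inl (by rw [hE]; exact quarter hb (Or.inl (by ring)))⟩
        · exact ⟨(x'+0)/4, GN_digit (by norm_num) hx',
            Or.inr (by rw [hE]; exact quarter hb (Or.inl (by ring)))⟩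

lemma J_subset : Set.Icc (2/3:ℝ) 1 ⊆ GN := by
  intro u hu
  rw [← GN_isClosed.closure_eq]
  rw [Metric.mem_closure_iff]
  intro ε hε
  obtain ⟨n, hn⟩ := exists_pow_lt_of_lt_one (show (0:ℝ) < 3/5*ε by linarith) (by norm_num : (1/4:ℝ) < 1)
  obtain ⟨x, hx, hb⟩ := (GN_approx n).1 u hu.1 hu.2
  refine ⟨x, hx, ?_⟩
  rw [Real.dist_eq, abs_sub_comm]
  calc |x - u| ≤ 5/3 * (1/4)^n := hb
  _ < 5/3 * (3/5*ε) := by nlinarith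
  _ = ε := by ring

lemma vol_img (d : ℝ) (S : Set ℝ) :
    volume ((fun y => (y + d)/4) '' S) = volume S / 4 := by
  have himg : (fun y => (y + d)/4) '' S = (fun x : ℝ => 4 * x - d) ⁻¹' S := by
    ext x
    simp only [Set.mem_image, Set.mem_preimage]
    constructor
    · rintro ⟨y, hy, rfl⟩; convert hy using 1; ring
    · intro h; exact ⟨4 * x - d, h, by ring⟩
  rw [himg]
  have hcomp : (fun x : ℝ => 4 * x - d) = (fun z : ℝ => -d + z) ∘ (fun x : ℝ => 4 * x) := by
    funext x; simp; ring
  rw [hcomp, Set.preimage_comp]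
  rw [Real.volume_preimage_mul_left (by norm_num : (4:ℝ) ≠ 0)]
  rw [measure_preimage_add]
  rw [show |(4:ℝ)⁻¹| = 4⁻¹ by rw [abs_of_nonneg]; norm_num]
  rw [ENNReal.ofReal_inv_of_pos (by norm_num), ENNReal.div_eq_inv_mul]
  norm_num

lemma vol_refl (S : Set ℝ) : volume ((fun x : ℝ => 5/3 - x) '' S) = volume S := by
  have himg : (fun x : ℝ => 5/3 - x) '' S = (fun x : ℝ => 5/3 - x) ⁻¹' S := by
    ext x
    simp only [Set.mem_image, Set.mem_preimage]
    constructor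
    · rintro ⟨y, hy, rfl⟩; convert hy using 1; ring
    · intro h; exact ⟨5/3 - x, h, by ring⟩
  rw [himg]
  have hcomp : (fun x : ℝ => 5/3 - x) = (fun z : ℝ => 5/3 + z) ∘ (fun x : ℝ => -x) := by
    funext x; simp; ring
  rw [hcomp, Set.preimage_comp, Measure.measure_preimage_neg, measure_preimage_add]

lemma mem_digits {d : ℝ} (hd : d ∈ ({0, 2, 3, 5} : Set ℝ)) :
    d = 0 ∨ d = 2 ∨ d = 3 ∨ d = 5 := by simpa using hd

lemma eqA1 : GN ∩ Set.Iio (1/2) = (fun y => (y + 0)/4) '' GN := by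
  ext x
  constructor
  · rintro ⟨hx, hlt⟩
    obtain ⟨d, hd, y, hy, rfl⟩ := GN_decomp hx
    obtain ⟨hy0, hy5⟩ := GN_subset hy
    simp only [Set.mem_Iio] at hlt
    rcases mem_digits hd with rfl|rfl|rfl|rfl
    · exact ⟨y, hy, rfl⟩
    all_goals exfalso; linarith
  · rintro ⟨y, hy, rfl⟩
    obtain ⟨hy0, hy5⟩ := GN_subset hy
    exact ⟨GN_digit (by norm_num) hy, by simp only [Set.mem_Iio]; linarith⟩

lemma eqA5 : GN ∩ Set.Ici (5/4) = (fun y => (y + 5)/4) '' GN := by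
  ext x
  constructor
  · rintro ⟨hx, hge⟩
    obtain ⟨d, hd, y, hy, rfl⟩ := GN_decomp hx
    obtain ⟨hy0, hy5⟩ := GN_subset hy
    simp only [Set.mem_Ici] at hge
    rcases mem_digits hd with rfl|rfl|rfl|rfl
    · exfalso; linarith
    · exfalso; linarith
    · exfalso; linarith
    · exact ⟨y, hy, rfl⟩
  · rintro ⟨y, hy, rfl⟩
    obtain ⟨hy0, hy5⟩ := GN_subset hy
    exact ⟨GN_digit (by norm_num) hy, by simp only [Set.mem_Ici]; linarith⟩

lemma eqA2 : GN ∩ Set.Ico (1/2) (2/3) = (fun y => (y + 2)/4) '' (GN ∩ Set.Ico 0 (2/3)) := by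
  ext x
  constructor
  · rintro ⟨hx, hge, hlt⟩
    obtain ⟨d, hd, y, hy, rfl⟩ := GN_decomp hx
    obtain ⟨hy0, hy5⟩ := GN_subset hy
    rcases mem_digits hd with rfl|rfl|rfl|rfl
    · exfalso; linarith
    · exact ⟨y, ⟨hy, hy0, by linarith⟩, rfl⟩
    · exfalso; linarith
    · exfalso; linarith
  · rintro ⟨y, ⟨hy, hy0, hylt⟩, rfl⟩
    exact ⟨GN_digit (by norm_num) hy, ⟨by linarith, by linarith⟩⟩

lemma eqA3 : GN ∩ Set.Ico (2/3) 1 = Set.Ico (2/3:ℝ) 1 :=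
  Set.inter_eq_self_of_subset_right ((Set.Ico_subset_Icc_self).trans J_subset)

lemma eqA4 : GN ∩ Set.Ico 1 (5/4) = (fun x : ℝ => 5/3 - x) '' (GN ∩ Set.Ioc (5/12) (2/3)) := by
  ext x
  constructor
  · rintro ⟨hx, hge, hlt⟩
    refine ⟨5/3 - x, ⟨GN_symm hx, ⟨by linarith, by linarith⟩⟩, by ring⟩
  · rintro ⟨y, ⟨hy, hygt, hyle⟩, rfl⟩
    exact ⟨GN_symm hy, ⟨by linarith, by linarith⟩⟩

lemma volIoc : volume (GN ∩ Set.Ioc (5/12) (2/3)) = volume (GN ∩ Set.Ico (1/2) (2/3)) := by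
  apply le_antisymm
  · have hsub : GN ∩ Set.Ioc (5/12) (2/3) ⊆ (GN ∩ Set.Ico (1/2) (2/3)) ∪ {(1:ℝ)/2, 2/3} := by
      rintro x ⟨hx, hgt, hle⟩
      obtain ⟨d, hd, y, hy, rfl⟩ := GN_decomp hx
      obtain ⟨hy0, hy5⟩ := GN_subset hy
      rcases eq_or_lt_of_le hle with heq | hlt
      · right; right; simpa using heq
      rcases mem_digits hd with rfl|rfl|rfl|rfl
      · exfalso; linarith
      · left; exact ⟨hx, by linarith, hlt⟩
      · exfalso; linarith
      · exfalso; linarith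
    calc volume (GN ∩ Set.Ioc (5/12) (2/3)) ≤ volume ((GN ∩ Set.Ico (1/2) (2/3)) ∪ {(1:ℝ)/2, 2/3}) :=
          measure_mono hsub
      _ ≤ volume (GN ∩ Set.Ico (1/2) (2/3)) + volume ({(1:ℝ)/2, 2/3} : Set ℝ) := measure_union_le _ _
      _ = volume (GN ∩ Set.Ico (1/2) (2/3)) := by
          rw [show ({(1:ℝ)/2, 2/3} : Set ℝ) = {(1:ℝ)/2} ∪ {(2:ℝ)/3} by rfl]
          have : volume ({(1:ℝ)/2} ∪ {(2:ℝ)/3} : Set ℝ) ≤ 0 := by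
            calc volume ({(1:ℝ)/2} ∪ {(2:ℝ)/3} : Set ℝ) ≤ volume ({(1:ℝ)/2} : Set ℝ) + volume ({(2:ℝ)/3} : Set ℝ) := measure_union_le _ _
              _ = 0 := by simp [Real.volume_singleton]
          rw [le_antisymm this zero_le, add_zero]
  · apply measure_mono
    rintro x ⟨hx, hge, hlt⟩
    exact ⟨hx, by constructor <;> [linarith; linarith]⟩

theorem GN_volume_eq_one : volume GN = 1 := by
  have hfin : volume GN ≠ ⊤ := by
    have h := measure_mono GN_subset (μ := volume)
    rw [Real.volume_Icc] at h
    exact ne_top_of_le_ne_top ENNReal.ofReal_ne_top h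
  -- partition
  have h1 : volume GN = volume (GN ∩ Set.Iio (1/2)) + volume (GN ∩ Set.Ici (1/2)) := by
    rw [← measure_inter_add_diff GN (measurableSet_Iio (a := (1:ℝ)/2))]
    congr 1
    rw [Set.diff_eq, Set.compl_Iio]
  have h2 : volume (GN ∩ Set.Ici (1/2)) =
      volume (GN ∩ Set.Ico (1/2) (2/3)) + volume (GN ∩ Set.Ici (2/3)) := by
    rw [← measure_inter_add_diff (GN ∩ Set.Ici (1/2)) (measurableSet_Iio (a := (2:ℝ)/3))]
    congr 1
    · rw [Set.inter_assoc, Set.Ici_inter_Iio]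
    · rw [Set.diff_eq, Set.compl_Iio, Set.inter_assoc, Set.Ici_inter_Ici]
      congr 1
      rw [max_eq_right (by norm_num : (1:ℝ)/2 ≤ 2/3)]
  have h3 : volume (GN ∩ Set.Ici (2/3)) =
      volume (GN ∩ Set.Ico (2/3) 1) + volume (GN ∩ Set.Ici 1) := by
    rw [← measure_inter_add_diff (GN ∩ Set.Ici (2/3)) (measurableSet_Iio (a := (1:ℝ)))]
    congr 1
    · rw [Set.inter_assoc, Set.Ici_inter_Iio]
    · rw [Set.diff_eq, Set.compl_Iio, Set.inter_assoc, Set.Ici_inter_Ici]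
      congr 1
      rw [max_eq_right (by norm_num : (2:ℝ)/3 ≤ 1)]
  have h4 : volume (GN ∩ Set.Ici 1) =
      volume (GN ∩ Set.Ico 1 (5/4)) + volume (GN ∩ Set.Ici (5/4)) := by
    rw [← measure_inter_add_diff (GN ∩ Set.Ici 1) (measurableSet_Iio (a := (5:ℝ)/4))]
    congr 1
    · rw [Set.inter_assoc, Set.Ici_inter_Iio]
    · rw [Set.diff_eq, Set.compl_Iio, Set.inter_assoc, Set.Ici_inter_Ici]
      congr 1
      rw [max_eq_right (by norm_num : (1:ℝ) ≤ 5/4)]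
  -- values of pieces
  have hv1 : volume (GN ∩ Set.Iio (1/2)) = volume GN / 4 := by rw [eqA1, vol_img]
  have hv5 : volume (GN ∩ Set.Ici (5/4)) = volume GN / 4 := by rw [eqA5, vol_img]
  have hv3 : volume (GN ∩ Set.Ico (2/3) 1) = ENNReal.ofReal (1/3) := by
    rw [eqA3, Real.volume_Ico]; norm_num
  have hsplit : GN ∩ Set.Ico 0 (2/3) = (GN ∩ Set.Iio (1/2)) ∪ (GN ∩ Set.Ico (1/2) (2/3)) := by
    ext x
    constructor
    · rintro ⟨hx, hx0, hxlt⟩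
      rcases lt_or_ge x (1/2) with h | h
      · exact Or.inl ⟨hx, h⟩
      · exact Or.inr ⟨hx, h, hxlt⟩
    · rintro (⟨hx, hxlt⟩ | ⟨hx, hge, hlt⟩)
      · exact ⟨hx, (GN_subset hx).1, by simpa using hxlt.trans_le (by norm_num)⟩
      · exact ⟨hx, (GN_subset hx).1, hlt⟩
  have hdisj : Disjoint (GN ∩ Set.Iio (1/2)) (GN ∩ Set.Ico (1/2) (2/3)) := by
    apply Set.disjoint_left.2
    rintro x ⟨_, hlt⟩ ⟨_, hge, _⟩
    exact absurd hge (not_le.2 hlt)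
  have hmeas2 : MeasurableSet (GN ∩ Set.Ico (1/2) (2/3)) :=
    GN_measurable.inter measurableSet_Ico
  have hv02 : volume (GN ∩ Set.Ico 0 (2/3)) =
      volume GN / 4 + volume (GN ∩ Set.Ico (1/2) (2/3)) := by
    rw [hsplit, measure_union hdisj hmeas2, hv1]
  have hm : volume (GN ∩ Set.Ico (1/2) (2/3)) =
      (volume GN / 4 + volume (GN ∩ Set.Ico (1/2) (2/3))) / 4 := by
    conv_lhs => rw [eqA2, vol_img, hv02]
  have hv4 : volume (GN ∩ Set.Ico 1 (5/4)) = volume (GN ∩ Set.Ico (1/2) (2/3)) := by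
    rw [eqA4, vol_refl, volIoc]
  have htotal : volume GN = volume GN / 4 + (volume (GN ∩ Set.Ico (1/2) (2/3)) +
      (ENNReal.ofReal (1/3) + (volume (GN ∩ Set.Ico (1/2) (2/3)) + volume GN / 4))) := by
    conv_lhs => rw [h1, h2, h3, h4]
    rw [hv1, hv3, hv4, hv5]
  -- finiteness of pieces
  have hmfin : volume (GN ∩ Set.Ico (1/2) (2/3)) ≠ ⊤ :=
    ne_top_of_le_ne_top hfin (measure_mono Set.inter_subset_left)
  have hq : volume GN / 4 ≠ ⊤ := (ENNReal.div_lt_top hfin (by norm_num)).ne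
  -- convert to reals
  have hμ4 : (volume GN / 4).toReal = (volume GN).toReal / 4 := by
    rw [ENNReal.toReal_div]; norm_num
  have hrs : (volume (GN ∩ Set.Ico (1/2) (2/3))).toReal =
      ((volume GN).toReal / 4 + (volume (GN ∩ Set.Ico (1/2) (2/3))).toReal) / 4 := by
    conv_lhs => rw [hm]
    rw [ENNReal.toReal_div, ENNReal.toReal_add hq hmfin, hμ4]
    norm_num
  have hrt : (volume GN).toReal = (volume GN).toReal / 4 +
      ((volume (GN ∩ Set.Ico (1/2) (2/3))).toReal + (1/3 +
      ((volume (GN ∩ Set.Ico (1/2) (2/3))).toReal + (volume GN).toReal / 4))) := by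
    conv_lhs => rw [htotal]
    rw [ENNReal.toReal_add hq (by
          exact ENNReal.add_ne_top.2 ⟨hmfin, ENNReal.add_ne_top.2 ⟨ENNReal.ofReal_ne_top,
            ENNReal.add_ne_top.2 ⟨hmfin, hq⟩⟩⟩),
        ENNReal.toReal_add hmfin (by
          exact ENNReal.add_ne_top.2 ⟨ENNReal.ofReal_ne_top, ENNReal.add_ne_top.2 ⟨hmfin, hq⟩⟩),
        ENNReal.toReal_add ENNReal.ofReal_ne_top (ENNReal.add_ne_top.2 ⟨hmfin, hq⟩),
        ENNReal.toReal_add hmfin hq, hμ4, ENNReal.toReal_ofReal (by norm_num)]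
  have hr1 : (volume GN).toReal = 1 := by
    set r := (volume GN).toReal
    set s := (volume (GN ∩ Set.Ico (1/2) (2/3))).toReal
    have hs : s = r / 12 := by linarith
    rw [hs] at hrt
    linarith
  calc volume GN = ENNReal.ofReal ((volume GN).toReal) := (ENNReal.ofReal_toReal hfin).symm
  _ = 1 := by rw [hr1]; simp
end

section
/- The boundary of the Guthrie-Nymann set X has Lebesgue measure zero. -/
open MeasureTheory

namespace GNaux

lemma mem_S_iff {a : ℝ} : a ∈ ({0, 2, 3, 5} : Set ℝ) ↔ a = 0 ∨ a = 2 ∨ a = 3 ∨ a = 5 := by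
  simp [Set.mem_insert_iff]

lemma S_nonneg {a : ℝ} (ha : a ∈ ({0, 2, 3, 5} : Set ℝ)) : 0 ≤ a := by
  rcases mem_S_iff.1 ha with h | h | h | h <;> simp [h] <;> norm_num

lemma S_le5 {a : ℝ} (ha : a ∈ ({0, 2, 3, 5} : Set ℝ)) : a ≤ 5 := by
  rcases mem_S_iff.1 ha with h | h | h | h <;> simp [h] <;> norm_num

lemma geomSum (c : ℝ) : HasSum (fun n : ℕ => c / 4 ^ (n + 1)) (c / 3) := by
  have h := hasSum_geometric_of_lt_one (by norm_num : (0:ℝ) ≤ 1/4) (by norm_num : (1/4:ℝ) < 1)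
  have h2 := h.mul_left (c / 4)
  have he : (fun n : ℕ => c / 4 * (1/4) ^ n) = fun n : ℕ => c / 4 ^ (n + 1) := by
    funext n
    rw [pow_succ]
    field_simp
    rw [mul_assoc, ← mul_pow]; norm_num
  rw [he] at h2
  convert h2 using 1
  rfl
  ring

lemma summable_digits (α : ℕ → ℝ) (hα : ∀ n, α n ∈ ({0, 2, 3, 5} : Set ℝ)) :
    Summable (fun n => α n / 4 ^ (n + 1)) := by
  apply Summable.of_nonneg_of_le
    (fun n => div_nonneg (S_nonneg (hα n)) (by positivity))
    (fun n => by
      have := S_le5 (hα n)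
      gcongr)
    (geomSum 5).summable


lemma GN_isClosed : IsClosed GN := by
  classical
  haveI : Finite ↥({0, 2, 3, 5} : Set ℝ) := (Set.toFinite _).to_subtype
  set f : (ℕ → ↥({0, 2, 3, 5} : Set ℝ)) → ℝ :=
    fun σ => ∑' n, (σ n : ℝ) / 4 ^ (n + 1) with hf
  have hcont : Continuous f := by
    apply continuous_tsum (u := fun n : ℕ => (5:ℝ) / 4 ^ (n + 1))
    · exact fun n => (continuous_subtype_val.comp (continuous_apply n)).div_const _
    · exact (geomSum 5).summable
    · intro n σ
      rw [Real.norm_eq_abs, abs_of_nonneg (div_nonneg (S_nonneg (σ n).2) (by positivity))]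
      exact div_le_div_of_nonneg_right (S_le5 (σ n).2) (by positivity) |>.trans_eq rfl
  have hGN : GN = Set.range f := by
    ext x
    constructor
    · rintro ⟨α, hα, hsum⟩
      exact ⟨fun n => ⟨α n, hα n⟩, hsum.tsum_eq⟩
    · rintro ⟨σ, rfl⟩
      exact ⟨fun n => σ n, fun n => (σ n).2, (summable_digits _ (fun n => (σ n).2)).hasSum⟩
  rw [hGN]
  exact (isCompact_range hcont).isClosed

/-- tail sums -/
lemma tail_hasSum {α : ℕ → ℝ} {x : ℝ} (h : HasSum (fun n => α n / 4 ^ (n + 1)) x) (k : ℕ) :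
    HasSum (fun n => α (n + k) / 4 ^ (n + k + 1))
      (x - ∑ i ∈ Finset.range k, α i / 4 ^ (i + 1)) := by
  apply (hasSum_nat_add_iff (f := fun n => α n / 4 ^ (n + 1)) k
    (g := x - ∑ i ∈ Finset.range k, α i / 4 ^ (i + 1))).mpr
  simpa using h

lemma shifted_geom (k : ℕ) : HasSum (fun n : ℕ => (5:ℝ) / 4 ^ (n + k + 1)) (5 / 3 / 4 ^ k) := by
  have h := (geomSum 5).mul_right ((4:ℝ) ^ k)⁻¹
  have he : (fun n : ℕ => 5 / 4 ^ (n + 1) * ((4:ℝ) ^ k)⁻¹) = fun n : ℕ => (5:ℝ) / 4 ^ (n + k + 1) := by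
    funext n
    rw [show n + k + 1 = (n + 1) + k by ring, pow_add]
    field_simp
    ring
  rw [he] at h
  simpa [div_eq_mul_inv] using h

lemma tail_bounds {α : ℕ → ℝ} {x : ℝ} (hα : ∀ n, α n ∈ ({0, 2, 3, 5} : Set ℝ))
    (h : HasSum (fun n => α n / 4 ^ (n + 1)) x) (k : ℕ) :
    0 ≤ x - ∑ i ∈ Finset.range k, α i / 4 ^ (i + 1) ∧
      x - ∑ i ∈ Finset.range k, α i / 4 ^ (i + 1) ≤ 5 / 3 / 4 ^ k := by
  have ht := tail_hasSum h k
  constructor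
  · exact hasSum_le (fun n => div_nonneg (S_nonneg (hα _)) (by positivity)) hasSum_zero ht
  · exact hasSum_le (fun n => div_le_div_of_nonneg_right (S_le5 (hα _)) (by positivity))
      ht (shifted_geom k)

/-- prepending a digit -/
lemma step_mem {x a : ℝ} (hx : x ∈ GN) (ha : a ∈ ({0, 2, 3, 5} : Set ℝ)) :
    a / 4 + x / 4 ∈ GN := by
  obtain ⟨α, hα, hsum⟩ := hx
  refine ⟨fun n => Nat.rec a (fun k _ => α k) n, fun n => ?_, ?_⟩
  · cases n with
    | zero => exact ha
    | succ k => exact hα k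
  · have h4 := hsum.div_const 4
    have := (hasSum_nat_add_iff
      (f := fun n => (Nat.rec a (fun k _ => α k) n : ℝ) / 4 ^ (n + 1)) 1 (g := x / 4)).mp ?_
    · convert this using 1
      rfl
      simp
      ring
    · convert h4 using 1
      rfl
      funext n
      show (α n) / 4 ^ (n + 1 + 1) = α n / 4 ^ (n + 1) / 4
      rw [div_div, ← pow_succ]

/-- prepending a block of digits -/
lemma prefix_mem (m : ℕ) (β : ℕ → ℝ) (hβ : ∀ k, β k ∈ ({0, 2, 3, 5} : Set ℝ))
    {y : ℝ} (hy : y ∈ GN) :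
    (∑ k ∈ Finset.range m, β k / 4 ^ (k + 1)) + y / 4 ^ m ∈ GN := by
  induction m generalizing β with
  | zero => simpa using hy
  | succ m ih =>
    have h := step_mem (ih (fun k => β (k + 1)) (fun k => hβ (k + 1))) (hβ 0)
    convert h using 1
    rw [Finset.sum_range_succ' (fun k => β k / 4 ^ (k + 1)) m]
    rw [add_div, Finset.sum_div]
    have e1 : ∀ k : ℕ, β (k + 1) / 4 ^ (k + 1 + 1) = β (k + 1) / 4 ^ (k + 1) / 4 := by
      intro k; rw [div_div, ← pow_succ]
    have e2 : y / 4 ^ (m + 1) = y / 4 ^ m / 4 := by rw [div_div, ← pow_succ]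
    simp only [e1, e2, pow_one, zero_add]
    ring


lemma pow4_mod3 (n : ℕ) : ∃ c : ℕ, 4 ^ n = 3 * c + 1 := by
  induction n with
  | zero => exact ⟨0, rfl⟩
  | succ n ih =>
    obtain ⟨c, hc⟩ := ih
    exact ⟨4 * c + 1, by rw [pow_succ, hc]; ring⟩

/-- every integer in the top third has a digit representation; realized with all-2 tail. -/
lemma rep (n : ℕ) : ∀ j : ℕ, 2 * 4 ^ n ≤ 3 * j + 2 → j + 1 ≤ 4 ^ n →
    ∃ α : ℕ → ℝ, (∀ k, α k ∈ ({0, 2, 3, 5} : Set ℝ)) ∧ (∀ k, n ≤ k → α k = 2) ∧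
      HasSum (fun k => α k / 4 ^ (k + 1)) (((j : ℝ) + 2 / 3) / 4 ^ n) := by
  induction n with
  | zero =>
    intro j h1 h2
    have hj : j = 0 := by omega
    subst hj
    refine ⟨fun _ => 2, fun k => by simp [mem_S_iff], fun k _ => rfl, ?_⟩
    simpa using geomSum 2
  | succ n ih =>
    intro j h1 h2
    obtain ⟨c, hc⟩ := pow4_mod3 n
    -- choose last digit a and quotient m' with j = 4 * m' + a, a ∈ {0,2,3,5}
    obtain ⟨m', a, ha, hj, hm1, hm2⟩ :
        ∃ (m' a : ℕ), (a = 0 ∨ a = 2 ∨ a = 3 ∨ a = 5) ∧ j = 4 * m' + a ∧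
          2 * 4 ^ n ≤ 3 * m' + 2 ∧ m' + 1 ≤ 4 ^ n := by
      have hdm := Nat.div_add_mod j 4
      have hr : j % 4 < 4 := Nat.mod_lt _ (by norm_num)
      have h8 : 2 * (4 ^ n * 4) ≤ 3 * j + 2 := by rw [pow_succ] at h1; exact h1
      have h2' : j + 1 ≤ 4 ^ n * 4 := by rw [pow_succ] at h2; exact h2
      rcases (by omega : j % 4 = 0 ∨ j % 4 = 1 ∨ j % 4 = 2 ∨ j % 4 = 3) with h | h | h | h
      · exact ⟨j / 4, 0, by tauto, by omega, by omega, by omega⟩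
      · exact ⟨j / 4 - 1, 5, by tauto, by omega, by omega, by omega⟩
      · exact ⟨j / 4, 2, by tauto, by omega, by omega, by omega⟩
      · exact ⟨j / 4, 3, by tauto, by omega, by omega, by omega⟩
    obtain ⟨α, hS, htail, hsum⟩ := ih m' hm1 hm2
    refine ⟨Function.update α n (a : ℝ), ?_, ?_, ?_⟩
    · intro k
      rcases eq_or_ne k n with rfl | hk
      · rw [Function.update_self]
        rcases ha with h | h | h | h <;> simp [h, mem_S_iff]
      · rw [Function.update_of_ne hk]; exact hS k
    · intro k hk
      rw [Function.update_of_ne (by omega : k ≠ n)]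
      exact htail k (by omega)
    · have h2n : α n = 2 := htail n le_rfl
      have hupd := hsum.update n ((a : ℝ) / 4 ^ (n + 1))
      -- HasSum (update (fun k => α k / 4^(k+1)) n (a/4^(n+1))) (a/4^(n+1) - α n/4^(n+1) + sum)
      have hfun : (Function.update (fun k => α k / 4 ^ (k + 1)) n ((a:ℝ) / 4 ^ (n + 1)))
          = fun k => (Function.update α n (a : ℝ)) k / 4 ^ (k + 1) := by
        funext k
        rcases eq_or_ne k n with rfl | hk
        · rw [Function.update_self, Function.update_self]
        · rw [Function.update_of_ne hk, Function.update_of_ne hk]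
      rw [hfun] at hupd
      convert hupd using 1
      rfl
      rw [h2n]
      have h4 : ((4:ℝ) ^ n) ≠ 0 := by positivity
      have hjr : (j : ℝ) = 4 * (m' : ℝ) + (a : ℝ) := by exact_mod_cast congrArg Nat.cast hj
      rw [hjr, pow_succ]
      field_simp
      ring


lemma rep_point_mem (n j : ℕ) (h1 : 2 * 4 ^ n ≤ 3 * j + 2) (h2 : j + 1 ≤ 4 ^ n) :
    ((j : ℝ) + 2 / 3) / 4 ^ n ∈ GN := by
  obtain ⟨α, hS, _, hsum⟩ := rep n j h1 h2
  exact ⟨α, hS, hsum⟩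

lemma Icc_subset_GN : Set.Icc (2/3 : ℝ) 1 ⊆ GN := by
  intro t ht
  obtain ⟨ht1, ht2⟩ := ht
  have ht0 : (0:ℝ) ≤ t := le_trans (by norm_num) ht1
  set j : ℕ → ℕ := fun n => min (4 ^ n - 1) ⌊(4:ℝ) ^ n * t⌋₊ with hjdef
  have hpos : ∀ n : ℕ, (1:ℕ) ≤ 4 ^ n := fun n => Nat.one_le_pow _ _ (by norm_num)
  -- membership of approximations
  have hmem : ∀ n, ((j n : ℝ) + 2 / 3) / 4 ^ n ∈ GN := by
    intro n
    obtain ⟨c, hc⟩ := pow4_mod3 n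
    apply rep_point_mem
    · -- 2 * 4^n ≤ 3 * j n + 2, i.e. j n ≥ 2c
      have hfl : 2 * c ≤ ⌊(4:ℝ) ^ n * t⌋₊ := by
        apply Nat.le_floor
        have : ((2:ℝ) * c) ≤ (2/3) * 4 ^ n := by
          have : ((4:ℝ) ^ n) = 3 * c + 1 := by exact_mod_cast hc
          rw [this]; push_cast; linarith
        calc ((2 * c : ℕ) : ℝ) = 2 * c := by push_cast; ring
          _ ≤ (2/3) * 4 ^ n := this
          _ ≤ 4 ^ n * t := by
              rw [mul_comm ((4:ℝ)^n) t]
              apply mul_le_mul_of_nonneg_right ht1 (by positivity)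
      have : 2 * c ≤ j n := by
        have h1 : 2 * c ≤ 4 ^ n - 1 := by omega
        exact le_min h1 hfl
      omega
    · have := Nat.sub_le (4 ^ n) 1
      have hm : j n ≤ 4 ^ n - 1 := min_le_left _ _
      omega
  -- distance bound
  have hdist : ∀ n, |t - ((j n : ℝ) + 2 / 3) / 4 ^ n| ≤ (1/4 : ℝ) ^ n := by
    intro n
    have h4 : (0:ℝ) < 4 ^ n := by positivity
    have hjle : (j n : ℝ) ≤ 4 ^ n * t := by
      have h1 : (j n : ℝ) ≤ (⌊(4:ℝ) ^ n * t⌋₊ : ℝ) :=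
        Nat.cast_le.mpr (min_le_right _ _)
      exact h1.trans (Nat.floor_le (by positivity))
    have hjge : 4 ^ n * t ≤ (j n : ℝ) + 1 := by
      rcases le_or_gt (⌊(4:ℝ) ^ n * t⌋₊) (4 ^ n - 1) with h | h
      · have hj' : j n = ⌊(4:ℝ) ^ n * t⌋₊ := min_eq_right h
        rw [hj']
        exact_mod_cast (Nat.lt_floor_add_one ((4:ℝ) ^ n * t)).le
      · have hj' : j n = 4 ^ n - 1 := min_eq_left h.le
        have hcast : ((j n : ℝ)) = (4:ℝ) ^ n - 1 := by
          rw [hj', Nat.cast_sub (hpos n)]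
          push_cast; ring
        rw [hcast]
        have : 4 ^ n * t ≤ (4:ℝ) ^ n := by nlinarith
        linarith
    have key : t - ((j n : ℝ) + 2/3) / 4 ^ n = (4 ^ n * t - ((j n : ℝ) + 2/3)) / 4 ^ n := by
      field_simp
    have habs : |4 ^ n * t - ((j n : ℝ) + 2/3)| ≤ 1 := by
      rw [abs_le]; constructor <;> linarith
    calc |t - ((j n : ℝ) + 2/3) / 4 ^ n|
        = |4 ^ n * t - ((j n : ℝ) + 2/3)| / 4 ^ n := by
          rw [key, abs_div, abs_of_pos h4]
      _ ≤ 1 / 4 ^ n := by gcongr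
      _ = (1/4 : ℝ) ^ n := by rw [div_pow, one_pow]
  have hlim : Filter.Tendsto (fun n => ((j n : ℝ) + 2/3) / 4 ^ n) Filter.atTop (nhds t) := by
    rw [tendsto_iff_dist_tendsto_zero]
    have hb : ∀ n, dist (((j n : ℝ) + 2/3) / 4 ^ n) t ≤ (1/4 : ℝ) ^ n := by
      intro n
      rw [Real.dist_eq, abs_sub_comm]
      exact hdist n
    exact squeeze_zero (fun n => dist_nonneg) hb
      (tendsto_pow_atTop_nhds_zero_of_lt_one (by norm_num : (0:ℝ) ≤ 1/4)
        (by norm_num : (1/4:ℝ) < 1))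
  exact GN_isClosed.mem_of_tendsto hlim (Filter.Eventually.of_forall hmem)


lemma interior_of_pattern {x : ℝ} {α : ℕ → ℝ} (hα : ∀ n, α n ∈ ({0, 2, 3, 5} : Set ℝ))
    (hsum : HasSum (fun n => α n / 4 ^ (n + 1)) x) {m : ℕ}
    (h3 : α m = 3) (h0 : α (m + 1) = 0) : x ∈ interior GN := by
  set p : ℝ := ∑ i ∈ Finset.range m, α i / 4 ^ (i + 1) with hp
  have htb := tail_bounds hα hsum (m + 2)
  have hsplit : ∑ i ∈ Finset.range (m + 2), α i / 4 ^ (i + 1) = p + 3 / 4 ^ (m + 1) := by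
    rw [Finset.sum_range_succ, Finset.sum_range_succ, h3, h0]
    simp
    exact hp.symm
  rw [hsplit] at htb
  obtain ⟨hlb, hub⟩ := htb
  have h4m : (0:ℝ) < 4 ^ m := by positivity
  have e1 : (4:ℝ) ^ (m + 1) = 4 ^ m * 4 := pow_succ 4 m
  have e2 : (4:ℝ) ^ (m + 2) = 4 ^ m * 16 := by rw [pow_succ, pow_succ]; ring
  have hkey1 : p + (2/3) / 4 ^ m < x := by
    have ha : (3:ℝ) / 4 ^ (m + 1) = (3/4) / 4 ^ m := by rw [e1]; field_simp
    have hb : (2/3 : ℝ) / 4 ^ m < (3/4) / 4 ^ m := by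
      exact div_lt_div_of_pos_right (by norm_num) (by positivity)
    rw [ha] at hlb
    linarith
  have hkey2 : x < p + 1 / 4 ^ m := by
    have ha : (3:ℝ) / 4 ^ (m + 1) + 5 / 3 / 4 ^ (m + 2) = (41/48) / 4 ^ m := by
      rw [e1, e2]; field_simp; ring
    have hb : (41/48 : ℝ) / 4 ^ m < 1 / 4 ^ m := by
      exact div_lt_div_of_pos_right (by norm_num) (by positivity)
    nlinarith [hub]
  apply mem_interior.mpr
  refine ⟨Set.Ioo (p + (2/3) / 4 ^ m) (p + 1 / 4 ^ m), ?_, isOpen_Ioo, ⟨hkey1, hkey2⟩⟩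
  intro y hy
  obtain ⟨hy1, hy2⟩ := hy
  have hs : (y - p) * 4 ^ m ∈ Set.Icc (2/3 : ℝ) 1 := by
    have hc1 : (2/3 : ℝ) / 4 ^ m * 4 ^ m = 2/3 := div_mul_cancel₀ _ (ne_of_gt h4m)
    have hc2 : (1 : ℝ) / 4 ^ m * 4 ^ m = 1 := div_mul_cancel₀ _ (ne_of_gt h4m)
    constructor
    · have := mul_le_mul_of_nonneg_right (le_of_lt (by linarith : (2/3:ℝ)/4^m < y - p)) h4m.le
      linarith
    · have := mul_le_mul_of_nonneg_right (le_of_lt (by linarith : y - p < (1:ℝ)/4^m)) h4m.le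
      linarith
  have hsG : (y - p) * 4 ^ m ∈ GN := Icc_subset_GN hs
  have := prefix_mem m α hα hsG
  convert this using 1
  rw [← hp]
  field_simp
  ring


noncomputable def v : Fin 4 → ℝ := ![0, 2, 3, 5]

lemma v_two : v 2 = 3 := by simp [v]
lemma v_zero : v 0 = 0 := by norm_num [v]

open Classical in
noncomputable def enc (a : ℝ) : Fin 4 :=
  if a = 0 then 0 else if a = 2 then 1 else if a = 3 then 2 else 3

lemma v_enc {a : ℝ} (ha : a ∈ ({0, 2, 3, 5} : Set ℝ)) : v (enc a) = a := by
  rcases mem_S_iff.1 ha with h | h | h | h <;> subst h <;> norm_num [enc, v] <;> simp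

noncomputable def T (k : ℕ) : Finset (Fin k → Fin 4 × Fin 4) :=
  Fintype.piFinset fun _ => (Finset.univ : Finset (Fin 4 × Fin 4)).erase (2, 0)

noncomputable def w (k : ℕ) (σ : Fin k → Fin 4 × Fin 4) : ℝ :=
  ∑ i : Fin k, (v (σ i).1 / 4 ^ (2 * (i : ℕ) + 1) + v (σ i).2 / 4 ^ (2 * (i : ℕ) + 2))

lemma pair_sum (f : ℕ → ℝ) (k : ℕ) :
    ∑ n ∈ Finset.range (2 * k), f n = ∑ i ∈ Finset.range k, (f (2 * i) + f (2 * i + 1)) := by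
  induction k with
  | zero => simp
  | succ k ih =>
    rw [show 2 * (k + 1) = 2 * k + 1 + 1 by ring, Finset.sum_range_succ, Finset.sum_range_succ,
      ih, Finset.sum_range_succ]
    ring

lemma card_T (k : ℕ) : (T k).card = 15 ^ k := by
  rw [T, Fintype.card_piFinset]
  have h : ((Finset.univ : Finset (Fin 4 × Fin 4)).erase (2, 0)).card = 15 := by
    rw [Finset.card_erase_of_mem (Finset.mem_univ _)]
    simp
  simp [h]

lemma cover (k : ℕ) :
    GN \ interior GN ⊆ ⋃ σ ∈ T k, Set.Icc (w k σ) (w k σ + 5 / 3 / 4 ^ (2 * k)) := by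
  rintro x ⟨hxGN, hxni⟩
  obtain ⟨α, hα, hsum⟩ := hxGN
  have hnopat : ∀ m, ¬(α m = 3 ∧ α (m + 1) = 0) := by
    intro m hm
    exact hxni (interior_of_pattern hα hsum hm.1 hm.2)
  set σ : Fin k → Fin 4 × Fin 4 := fun i => (enc (α (2 * i)), enc (α (2 * i + 1))) with hσ
  have hσT : σ ∈ T k := by
    rw [T, Fintype.mem_piFinset]
    intro i
    rw [Finset.mem_erase]
    refine ⟨?_, Finset.mem_univ _⟩
    intro h
    have h1 : enc (α (2 * i)) = 2 := congrArg Prod.fst h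
    have h2 : enc (α (2 * i + 1)) = 0 := congrArg Prod.snd h
    apply hnopat (2 * (i : ℕ))
    constructor
    · rw [← v_enc (hα (2 * i)), h1, v_two]
    · rw [← v_enc (hα (2 * i + 1)), h2, v_zero]
  have hw : w k σ = ∑ i ∈ Finset.range (2 * k), α i / 4 ^ (i + 1) := by
    rw [pair_sum (fun i => α i / 4 ^ (i + 1)) k, w,
      ← Fin.sum_univ_eq_sum_range (fun i => α (2 * i) / 4 ^ (2 * i + 1) + α (2 * i + 1) / 4 ^ (2 * i + 1 + 1)) k]
    apply Finset.sum_congr rfl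
    intro i _
    rw [hσ]
    simp only []
    rw [v_enc (hα (2 * i)), v_enc (hα (2 * i + 1))]
  obtain ⟨hlb, hub⟩ := tail_bounds hα hsum (2 * k)
  apply Set.mem_biUnion hσT
  rw [Set.mem_Icc, hw]
  constructor <;> linarith

lemma frontier_le_bound (k : ℕ) :
    volume (frontier GN) ≤ ENNReal.ofReal ((5 / 3) * (15 / 16) ^ k) := by
  have hsub : frontier GN ⊆ GN \ interior GN := by
    rw [GN_isClosed.frontier_eq]
  calc volume (frontier GN)
      ≤ volume (⋃ σ ∈ T k, Set.Icc (w k σ) (w k σ + 5 / 3 / 4 ^ (2 * k))) :=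
        measure_mono (hsub.trans (cover k))
    _ ≤ ∑ σ ∈ T k, volume (Set.Icc (w k σ) (w k σ + 5 / 3 / 4 ^ (2 * k))) :=
        measure_biUnion_finset_le _ _
    _ = ∑ _σ ∈ T k, ENNReal.ofReal (5 / 3 / 4 ^ (2 * k)) := by
        apply Finset.sum_congr rfl
        intro σ _
        rw [Real.volume_Icc]
        congr 1
        ring
    _ = (T k).card • ENNReal.ofReal (5 / 3 / 4 ^ (2 * k)) := Finset.sum_const _
    _ = ENNReal.ofReal ((5 / 3) * (15 / 16) ^ k) := by
        rw [card_T, nsmul_eq_mul]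
        rw [show ((15 ^ k : ℕ) : ENNReal) = ENNReal.ofReal ((15 : ℝ) ^ k) by
          rw [← ENNReal.ofReal_natCast]; norm_num]
        rw [← ENNReal.ofReal_mul (by positivity)]
        congr 1
        rw [pow_mul]
        norm_num
        rw [div_pow]
        field_simp

end GNaux

theorem GN_frontier_volume_eq_zero : volume (frontier GN) = 0 := by
  have hb := GNaux.frontier_le_bound
  have hlim : Filter.Tendsto (fun k => ENNReal.ofReal ((5 / 3) * (15 / 16) ^ k))
      Filter.atTop (nhds 0) := by
    have hr : Filter.Tendsto (fun k : ℕ => (5 / 3) * (15 / 16 : ℝ) ^ k) Filter.atTop (nhds 0) := by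
      have := (tendsto_pow_atTop_nhds_zero_of_lt_one (by norm_num : (0:ℝ) ≤ 15/16)
        (by norm_num : (15/16:ℝ) < 1)).const_mul (5/3 : ℝ)
      simpa using this
    have := ENNReal.tendsto_ofReal hr
    simpa using this
  have := le_of_tendsto_of_tendsto' (tendsto_const_nhds
    (x := volume (frontier GN)) (f := Filter.atTop (α := ℕ))) hlim hb
  simpa using this
end

section
/- The sets C_n^l = ∑_{i=1}^{n-1} 2/4^i + (1/4^n)·X, for n ∈ ℕ, n ≥ 1, are pairwise disjoint, and each is disjoint from the interval [2/3, 1]. -/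
/-- The left affine copy `C_n^l = ∑_{i=1}^{n-1} 2/4^i + (1/4^n)·X`. -/
def Cl (n : ℕ) : Set ℝ :=
  (fun x => (∑ i ∈ Finset.range (n - 1), (2 : ℝ) / 4 ^ (i + 1)) + x / 4 ^ n) '' GN

lemma GN_bounds {x : ℝ} (hx : x ∈ GN) : 0 ≤ x ∧ x ≤ 5 / 3 := by
  obtain ⟨α, hα, hsum⟩ := hx
  have hge : ∀ n, (0 : ℝ) ≤ α n ∧ α n ≤ 5 := by
    intro n
    have := hα n
    simp only [Set.mem_insert_iff, Set.mem_singleton_iff] at this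
    rcases this with h | h | h | h <;> rw [h] <;> norm_num
  have hgeom : HasSum (fun n : ℕ => (5 : ℝ) / 4 ^ (n + 1)) (5 / 3) := by
    have h := hasSum_geometric_of_lt_one (by norm_num : (0:ℝ) ≤ 1/4) (by norm_num)
    have h2 := h.mul_left (5/4)
    have heq : (fun n : ℕ => (5:ℝ)/4 * (1/4)^n) = fun n : ℕ => (5:ℝ) / 4 ^ (n + 1) := by
      funext n
      rw [div_pow, one_pow, pow_succ]
      field_simp
    rw [heq] at h2
    have h53 : (5:ℝ)/3 = 5/4 * (1 - 1/4)⁻¹ := by norm_num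
    rw [h53]
    exact h2
  constructor
  · refine hasSum_le (fun n => ?_) hasSum_zero hsum
    exact div_nonneg (hge n).1 (by positivity)
  · refine hasSum_le (fun n => ?_) hsum hgeom
    gcongr
    exact (hge n).2

lemma sum_geom (m : ℕ) :
    ∑ i ∈ Finset.range m, (2 : ℝ) / 4 ^ (i + 1) = 2/3 - (2/3) / 4 ^ m := by
  induction m with
  | zero => simp
  | succ m ih =>
    rw [Finset.sum_range_succ, ih, pow_succ]
    have h4 : (4:ℝ)^m ≠ 0 := by positivity
    field_simp
    ring

lemma key_eq (m : ℕ) :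
    (2:ℝ)/3 - (2/3) / 4 ^ m + (5/3) / 4 ^ (m+1) = 2/3 - 1 / 4 ^ (m+1) := by
  have h4n : (4:ℝ)^m ≠ 0 := by positivity
  rw [pow_succ]
  field_simp
  ring

lemma Cl_subset {n : ℕ} (hn : 1 ≤ n) :
    Cl n ⊆ Set.Icc (2/3 - (2/3) / 4 ^ (n - 1)) (2/3 - 1 / 4 ^ n) := by
  rintro y ⟨x, hx, rfl⟩
  obtain ⟨hx0, hx5⟩ := GN_bounds hx
  obtain ⟨m, rfl⟩ : ∃ m, n = m + 1 := ⟨n - 1, by omega⟩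
  simp only [Nat.add_sub_cancel]
  rw [sum_geom]
  have h4 : (0:ℝ) < 4 ^ m := by positivity
  have h4' : (0:ℝ) < 4 ^ (m + 1) := by positivity
  constructor
  · have : 0 ≤ x / 4 ^ (m + 1) := by positivity
    linarith
  · have hle : x / 4 ^ (m + 1) ≤ (5/3) / 4 ^ (m + 1) := by gcongr
    have key := key_eq m
    linarith

lemma Cl_disj_lt {k n : ℕ} (hk : 1 ≤ k) (h : k < n) : Disjoint (Cl k) (Cl n) := by
  have h1 := Cl_subset hk
  have h2 := Cl_subset (le_trans hk h.le)
  rw [Set.disjoint_left]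
  intro y hy1 hy2
  have a := (h1 hy1).2
  have b := (h2 hy2).1
  have hkn : k ≤ n - 1 := by omega
  have hp : (4:ℝ)^k ≤ 4^(n-1) := pow_le_pow_right₀ (by norm_num) hkn
  have hp2 : (0:ℝ) < 4^k := by positivity
  have hp3 : (0:ℝ) < 4^(n-1) := by positivity
  have key : (2:ℝ)/3 / 4^(n-1) < 1 / 4^k := by
    rw [div_lt_div_iff₀ hp3 hp2]
    nlinarith
  linarith

theorem Cl_pairwise_disjoint :
    (∀ k n : ℕ, 1 ≤ k → 1 ≤ n → k ≠ n → Disjoint (Cl k) (Cl n)) ∧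
      (∀ n : ℕ, 1 ≤ n → Disjoint (Cl n) (Set.Icc (2 / 3 : ℝ) 1)) := by
  constructor
  · intro k n hk hn hne
    rcases lt_or_gt_of_ne hne with h | h
    · exact Cl_disj_lt hk h
    · exact (Cl_disj_lt hn h).symm
  · intro n hn
    have h1 := Cl_subset hn
    rw [Set.disjoint_left]
    intro y hy1 hy2
    have a := (h1 hy1).2
    have b := hy2.1
    have : (0:ℝ) < 1 / 4 ^ n := by positivity
    linarith
end

section
/- The Hausdorff dimension of the boundary of the Guthrie-Nymann set X equals log 3 / log 4. -/
open Filter Topology Set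
open scoped NNReal ENNReal

noncomputable section

namespace GNP

def psum (g : ℕ → ℝ) (n : ℕ) : ℝ := ∑ k ∈ Finset.range n, g k / 4 ^ (k + 1)

lemma hasSum_geom_digit (c : ℝ) : HasSum (fun n => c / 4 ^ (n + 1)) (c / 3) := by
  have h : HasSum (fun n : ℕ => (1/4 : ℝ) ^ n) ((1 - 1/4)⁻¹) :=
    hasSum_geometric_of_lt_one (by norm_num) (by norm_num)
  have h2 := h.mul_left (c / 4)
  have e1 : (fun n : ℕ => c / 4 * (1/4) ^ n) = fun n : ℕ => c / 4 ^ (n + 1) := by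
    funext n
    rw [pow_succ, one_div, inv_pow, div_mul_eq_mul_div, div_eq_div_iff (by positivity) (by positivity)]
    field_simp
  have e2 : c / 4 * (1 - 1/4 : ℝ)⁻¹ = c / 3 := by ring_nf
  rwa [e1, e2] at h2

lemma sum_le_of_le {g : ℕ → ℝ} {x c : ℝ} (hg : ∀ n, g n ≤ c)
    (hx : HasSum (fun n => g n / 4 ^ (n + 1)) x) : x ≤ c / 3 :=
  hasSum_le (fun n => by gcongr; exact hg n) hx (hasSum_geom_digit c)

lemma sum_nonneg' {g : ℕ → ℝ} {x : ℝ} (hg : ∀ n, 0 ≤ g n)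
    (hx : HasSum (fun n => g n / 4 ^ (n + 1)) x) : 0 ≤ x :=
  hasSum_le (fun n => div_nonneg (hg n) (by positivity)) hasSum_zero hx

/-- shifting a digit series -/
lemma hasSum_shift {g : ℕ → ℝ} {x : ℝ} (hx : HasSum (fun n => g n / 4 ^ (n + 1)) x) (n : ℕ) :
    HasSum (fun k => g (n + k) / 4 ^ (k + 1)) ((x - psum g n) * 4 ^ n) := by
  have h0 : HasSum (fun m => g m / 4 ^ (m + 1)) ((x - psum g n) + ∑ i ∈ Finset.range n, g i / 4 ^ (i + 1)) := by
    simpa [psum] using hx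
  have h1 := (hasSum_nat_add_iff n).mpr h0
  have h2 := h1.mul_right ((4:ℝ) ^ n)
  convert h2 using 2 with k
  · rfl
  · rw [add_comm n k]
    rw [div_mul_eq_mul_div, div_eq_div_iff (by positivity) (by positivity)]
    ring


def q4 : Fin 4 → ℤ := ![0, 2, 3, 5]

lemma q4_cases (i : Fin 4) : q4 i = 0 ∨ q4 i = 2 ∨ q4 i = 3 ∨ q4 i = 5 := by
  fin_cases i <;> simp [q4]

lemma q4_nonneg (i : Fin 4) : (0:ℤ) ≤ q4 i := by rcases q4_cases i with h|h|h|h <;> omega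
lemma q4_le (i : Fin 4) : q4 i ≤ 5 := by rcases q4_cases i with h|h|h|h <;> omega

lemma GN_iff {x : ℝ} : x ∈ GN ↔ ∃ a : ℕ → Fin 4,
    HasSum (fun n => (q4 (a n) : ℝ) / 4 ^ (n + 1)) x := by
  constructor
  · rintro ⟨α, hα, hsum⟩
    classical
    refine ⟨fun n => if α n = 0 then 0 else if α n = 2 then 1 else if α n = 3 then 2 else 3, ?_⟩
    convert hsum using 2 with n
    rcases hα n with h|h|h|h <;> simp_all [q4] <;> norm_num
  · rintro ⟨a, hsum⟩
    refine ⟨fun n => (q4 (a n) : ℝ), fun n => ?_, hsum⟩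
    show ((q4 (a n) : ℝ)) ∈ ({0, 2, 3, 5} : Set ℝ)
    rcases q4_cases (a n) with h|h|h|h <;> rw [h] <;> norm_num

lemma GN_subset : GN ⊆ Icc (0:ℝ) (5/3) := by
  rintro x ⟨α, hα, hsum⟩
  constructor
  · exact sum_nonneg' (fun n => by rcases hα n with h|h|h|h <;> rw [h] <;> norm_num) hsum
  · exact sum_le_of_le (fun n => by rcases hα n with h|h|h|h <;> rw [h] <;> norm_num) hsum

/-- integer value of a length-`n` prefix -/
def Az (a : ℕ → Fin 4) : ℕ → ℤ
  | 0 => 0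
  | n + 1 => 4 * Az a n + q4 (a n)

@[simp] lemma Az_zero (a : ℕ → Fin 4) : Az a 0 = 0 := rfl
lemma Az_succ (a : ℕ → Fin 4) (n : ℕ) : Az a (n + 1) = 4 * Az a n + q4 (a n) := rfl

lemma psum_eq (a : ℕ → Fin 4) (n : ℕ) :
    psum (fun k => (q4 (a k) : ℝ)) n = (Az a n : ℝ) / 4 ^ n := by
  induction n with
  | zero => simp [psum, Az]
  | succ n ih =>
    rw [psum, Finset.sum_range_succ, ← psum, ih, Az_succ]
    push_cast
    field_simp
    ring

/-- remainders of a representation -/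
lemma rep_remainder {a : ℕ → Fin 4} {x : ℝ}
    (hx : HasSum (fun n => (q4 (a n) : ℝ) / 4 ^ (n + 1)) x) (n : ℕ) :
    x * 4 ^ n - Az a n ∈ GN ∧ x * 4 ^ n - (Az a n : ℝ) ∈ Icc (0:ℝ) (5/3) := by
  have h := hasSum_shift hx n
  have he : (x - psum (fun k => (q4 (a k) : ℝ)) n) * 4 ^ n = x * 4 ^ n - Az a n := by
    rw [psum_eq]; field_simp
  rw [he] at h
  have hGN : x * 4 ^ n - (Az a n : ℝ) ∈ GN := GN_iff.mpr ⟨fun k => a (n + k), h⟩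
  exact ⟨hGN, GN_subset hGN⟩

def mu (x : ℝ) (n : ℕ) : ℤ := ⌊x * 4 ^ n⌋
def dig (x : ℝ) (n : ℕ) : ℤ := mu x (n + 1) - 4 * mu x n

lemma dig_bounds (x : ℝ) (n : ℕ) : 0 ≤ dig x n ∧ dig x n ≤ 3 := by
  have h1 : x * 4 ^ (n + 1) = x * 4 ^ n * 4 := by ring
  have h2 : (4 * ⌊x * 4 ^ n⌋ : ℤ) ≤ ⌊x * 4 ^ (n + 1)⌋ := by
    rw [h1]
    apply Int.le_floor.mpr
    push_cast
    nlinarith [Int.floor_le (x * 4 ^ n)]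
  have h3 : ⌊x * 4 ^ (n + 1)⌋ < 4 * ⌊x * 4 ^ n⌋ + 4 := by
    rw [h1]
    apply Int.floor_lt.mpr
    push_cast
    nlinarith [Int.lt_floor_add_one (x * 4 ^ n)]
  unfold dig mu
  omega

/-- the `c` sequence of a representation -/
def cseq (a : ℕ → Fin 4) (x : ℝ) (n : ℕ) : ℤ := mu x n - Az a n

lemma cseq_mem {a : ℕ → Fin 4} {x : ℝ}
    (hx : HasSum (fun n => (q4 (a n) : ℝ) / 4 ^ (n + 1)) x) (n : ℕ) :
    cseq a x n = 0 ∨ cseq a x n = 1 := by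
  obtain ⟨-, h0, h1⟩ := rep_remainder hx n
  have hfl : mu x n = Az a n + ⌊x * 4 ^ n - (Az a n : ℝ)⌋ := by
    unfold mu
    rw [show x * 4 ^ n = (x * 4 ^ n - (Az a n : ℝ)) + (Az a n : ℝ) by ring, Int.floor_add_intCast]
    ring
  have hl : (0:ℤ) ≤ ⌊x * 4 ^ n - (Az a n : ℝ)⌋ := Int.le_floor.mpr (by exact_mod_cast h0)
  have hu : ⌊x * 4 ^ n - (Az a n : ℝ)⌋ < 2 := Int.floor_lt.mpr (by push_cast; linarith)
  unfold cseq
  omega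

lemma cseq_rec (a : ℕ → Fin 4) (x : ℝ) (n : ℕ) :
    cseq a x (n + 1) = 4 * cseq a x n + dig x n - q4 (a n) := by
  unfold cseq dig
  rw [Az_succ]
  ring

lemma cseq_zero (a : ℕ → Fin 4) (x : ℝ) : cseq a x 0 = mu x 0 := by
  unfold cseq Az; ring

/-- if the canonical digit is 3, the representation's offset is 0 there -/
lemma dig3_cseq {a : ℕ → Fin 4} {x : ℝ}
    (hx : HasSum (fun n => (q4 (a n) : ℝ) / 4 ^ (n + 1)) x) {n : ℕ} (h3 : dig x n = 3) :
    cseq a x n = 0 := by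
  have h1 := cseq_mem hx n
  have h2 := cseq_mem hx (n + 1)
  have h4 := cseq_rec a x n
  have h5 := q4_cases (a n)
  omega

/-- parity propagation -/
lemma cseq_parity {a : ℕ → Fin 4} {x : ℝ}
    (hx : HasSum (fun n => (q4 (a n) : ℝ) / 4 ^ (n + 1)) x) {n : ℕ}
    (h3 : ∀ k < n, dig x k ≠ 3) :
    cseq a x n % 2 = (mu x 0 + ∑ k ∈ Finset.range n, dig x k) % 2 := by
  induction n with
  | zero => simp [cseq_zero]
  | succ n ih =>
    have hih := ih (fun k hk => h3 k (by omega))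
    have h1 := cseq_mem hx n
    have h2 := cseq_mem hx (n + 1)
    have h4 := cseq_rec a x n
    have h5 := q4_cases (a n)
    have h6 := dig_bounds x n
    have h7 := h3 n (by omega)
    rw [Finset.sum_range_succ]
    omega



lemma summable_rep (a : ℕ → Fin 4) : Summable (fun n => (q4 (a n) : ℝ) / 4 ^ (n + 1)) :=
  Summable.of_nonneg_of_le
    (fun n => div_nonneg (by exact_mod_cast q4_nonneg (a n)) (by positivity))
    (fun n => by gcongr; · norm_num; · exact_mod_cast q4_le (a n))
    (hasSum_geom_digit 5).summable

def sig4 (a : ℕ → Fin 4) : ℝ := ∑' n, (q4 (a n) : ℝ) / 4 ^ (n + 1)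

lemma GN_eq_range : GN = Set.range sig4 := by
  ext x
  rw [GN_iff]
  constructor
  · rintro ⟨a, ha⟩; exact ⟨a, ha.tsum_eq.symm ▸ rfl⟩
  · rintro ⟨a, ha⟩; exact ⟨a, ha ▸ (summable_rep a).hasSum⟩

lemma continuous_sig4 : Continuous sig4 := by
  apply continuous_tsum (u := fun n => (5:ℝ) / 4 ^ (n + 1))
  · intro n
    exact (continuous_of_discreteTopology :
      Continuous (fun i : Fin 4 => (q4 i : ℝ) / 4 ^ (n + 1))).comp (continuous_apply n)
  · exact (hasSum_geom_digit 5).summable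
  · intro n a
    rw [Real.norm_eq_abs, abs_div, abs_of_nonneg (by positivity : (0:ℝ) ≤ (4:ℝ)^(n+1))]
    gcongr
    rw [abs_of_nonneg (by exact_mod_cast q4_nonneg (a n))]
    exact_mod_cast q4_le (a n)

lemma isClosed_GN : IsClosed GN := by
  rw [GN_eq_range, ← Set.image_univ]
  exact (isCompact_univ.image continuous_sig4).isClosed

lemma zero_mem_GN : (0:ℝ) ∈ GN := by
  refine ⟨fun _ => 0, fun n => by norm_num, ?_⟩
  simpa using hasSum_zero

def PrefVal (n : ℕ) (p : ℝ) : Prop := ∃ a : ℕ → Fin 4, p = psum (fun k => (q4 (a k) : ℝ)) n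

lemma concat {n : ℕ} {p t : ℝ} (hp : PrefVal n p) (ht : t ∈ GN) : p + t / 4 ^ n ∈ GN := by
  obtain ⟨a, rfl⟩ := hp
  obtain ⟨b, hb⟩ := GN_iff.mp ht
  classical
  set ab : ℕ → Fin 4 := fun k => if k < n then a k else b (k - n) with hab
  set f : ℕ → ℝ := fun m => (q4 (ab m) : ℝ) / 4 ^ (m + 1) with hf
  have h1 : HasSum (fun k => f (k + n)) (t / 4 ^ n) := by
    have hb' := hb.mul_right ((4:ℝ) ^ n)⁻¹
    have : t * ((4:ℝ) ^ n)⁻¹ = t / 4 ^ n := by rw [div_eq_mul_inv]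
    rw [this] at hb'
    convert hb' using 2 with k
    · rfl
    have h2 : ab (k + n) = b k := by simp [hab, Nat.add_sub_cancel]
    rw [hf]
    simp only [h2]
    rw [show k + n + 1 = (k + 1) + n by omega, pow_add, ← div_div, div_eq_mul_inv]
  have h2 := (hasSum_nat_add_iff n).mp h1
  have h3 : ∑ i ∈ Finset.range n, f i = psum (fun k => (q4 (a k) : ℝ)) n := by
    apply Finset.sum_congr rfl
    intro i hi
    have : i < n := Finset.mem_range.mp hi
    simp [hf, hab, this]
  rw [h3] at h2
  rw [GN_iff]
  exact ⟨ab, by convert h2 using 1; rfl; ring⟩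

lemma prefval_mem {n : ℕ} {p : ℝ} (hp : PrefVal n p) : p ∈ GN := by
  have := concat hp zero_mem_GN
  simpa using this

lemma prefval_zero : PrefVal 0 0 := ⟨fun _ => 0, by simp [psum]⟩

lemma prefval_cons {n : ℕ} {p : ℝ} (i : Fin 4) (hp : PrefVal n p) :
    PrefVal (n + 1) ((q4 i : ℝ) / 4 + p / 4) := by
  obtain ⟨a, rfl⟩ := hp
  refine ⟨fun k => match k with | 0 => i | (m+1) => a m, ?_⟩
  simp only [psum]
  rw [Finset.sum_range_succ']
  rw [Finset.sum_div, add_comm]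
  congr 1
  · apply Finset.sum_congr rfl
    intro k _
    show ((q4 (a k) : ℝ) / 4 ^ (k + 1)) / 4 = (q4 (a k) : ℝ) / 4 ^ (k + 1 + 1)
    rw [div_div, ← pow_succ]
  · norm_num

/-- backward digit step -/
lemma backward_step (b : ℕ) (hb : b ≤ 3) (c' : ℕ) (hc' : c' ≤ 1) :
    ∃ (c : ℕ) (i : Fin 4), c ≤ 1 ∧ (q4 i : ℤ) = 4 * c + b - c' := by
  interval_cases b <;> interval_cases c'
  · exact ⟨0, 0, by norm_num, by simp [q4]⟩
  · exact ⟨1, 2, by norm_num, by simp [q4]⟩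
  · exact ⟨1, 3, by norm_num, by simp [q4]⟩
  · exact ⟨0, 0, by norm_num, by simp [q4]⟩
  · exact ⟨0, 1, by norm_num, by simp [q4]⟩
  · exact ⟨1, 3, by norm_num, by simp [q4]⟩
  · exact ⟨0, 2, by norm_num, by simp [q4]⟩
  · exact ⟨0, 1, by norm_num, by simp [q4]⟩

lemma approx (n : ℕ) : ∀ t ∈ Icc (0:ℝ) 1, ∃ c : ℕ, c ≤ 1 ∧ ∃ p, PrefVal n p ∧
    t + c - p ∈ Icc (0:ℝ) (2 / 4 ^ n) := by
  induction n with
  | zero =>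
    intro t ht
    refine ⟨0, Nat.zero_le 1, 0, prefval_zero, ?_, ?_⟩
    · simpa using ht.1
    · have := ht.2
      push_cast
      norm_num
      linarith
  | succ n ih =>
    intro t ht
    -- digit
    have h4t : (0:ℝ) ≤ 4 * t := by linarith [ht.1]
    set bz : ℤ := min ⌊4 * t⌋ 3 with hbz
    have hbz0 : 0 ≤ bz := le_min (Int.le_floor.mpr (by exact_mod_cast h4t)) (by norm_num)
    have hbz3 : bz ≤ 3 := min_le_right _ _
    set t' : ℝ := 4 * t - bz with ht'
    have ht'mem : t' ∈ Icc (0:ℝ) 1 := by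
      constructor
      · rcases le_or_gt ⌊4 * t⌋ 3 with h | h
        · have : bz = ⌊4 * t⌋ := min_eq_left h
          rw [ht', this]
          linarith [Int.floor_le (4 * t)]
        · have : bz = 3 := min_eq_right (by omega)
          rw [ht', this]
          have : (4:ℝ) ≤ ⌊4 * t⌋ := by exact_mod_cast (by omega : (4:ℤ) ≤ ⌊4 * t⌋)
          have := Int.floor_le (4 * t)
          push_cast
          linarith
      · rcases le_or_gt ⌊4 * t⌋ 3 with h | h
        · have : bz = ⌊4 * t⌋ := min_eq_left h
          rw [ht', this]
          linarith [Int.lt_floor_add_one (4 * t)]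
        · have hb3 : bz = 3 := min_eq_right (by omega)
          rw [ht', hb3]
          have : t ≤ 1 := ht.2
          push_cast
          linarith
    obtain ⟨c', hc', p', hp', hres⟩ := ih t' ht'mem
    obtain ⟨c, i, hc, hqi⟩ := backward_step bz.toNat (by omega) c' hc'
    refine ⟨c, hc, (q4 i : ℝ) / 4 + p' / 4, prefval_cons i hp', ?_⟩
    have hq : (q4 i : ℝ) = 4 * c + bz - c' := by
      have : (q4 i : ℤ) = 4 * c + bz - c' := by rw [hqi]; omega
      exact_mod_cast this
    have key : t + c - ((q4 i : ℝ) / 4 + p' / 4) = (t' + c' - p') / 4 := by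
      rw [hq, ht']
      push_cast
      ring
    rw [key]
    constructor
    · have := hres.1; linarith
    · have := hres.2
      rw [div_le_div_iff₀ (by norm_num) (by positivity)]
      rw [le_div_iff₀ (by positivity : (0:ℝ) < 4 ^ n)] at this
      rw [pow_succ]
      nlinarith

lemma zero_one_sub {t : ℝ} (ht : t ∈ Icc (0:ℝ) 1) : t ∈ GN ∨ t + 1 ∈ GN := by
  by_contra hcon
  push_neg at hcon
  obtain ⟨h0, h1⟩ := hcon
  have hopen : IsOpen GNᶜ := isClosed_GN.isOpen_compl
  obtain ⟨ε₀, hε₀, hb₀⟩ := Metric.isOpen_iff.mp hopen t h0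
  obtain ⟨ε₁, hε₁, hb₁⟩ := Metric.isOpen_iff.mp hopen (t + 1) h1
  obtain ⟨n, hn⟩ := exists_pow_lt_of_lt_one (show (0:ℝ) < min ε₀ ε₁ / 2 by positivity)
    (show (1/4 : ℝ) < 1 by norm_num)
  obtain ⟨c, hc, p, hp, hres⟩ := approx n t ht
  have hpGN := prefval_mem hp
  have hdist : |t + c - p| < min ε₀ ε₁ := by
    rw [abs_of_nonneg hres.1]
    calc t + c - p ≤ 2 / 4 ^ n := hres.2
    _ < min ε₀ ε₁ := by
        rw [div_pow, one_pow] at hn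
        have h2 : (2:ℝ) / 4 ^ n = 2 * (1 / 4 ^ n) := by ring
        rw [h2]
        linarith
  have hmem : p ∈ Metric.ball (t + c) (min ε₀ ε₁) := by
    rw [Metric.mem_ball, Real.dist_eq, abs_sub_comm]
    exact hdist
  interval_cases c
  · refine (hb₀ (Metric.ball_subset_ball (min_le_left _ _) (by simpa using hmem))) hpGN
  · refine (hb₁ (Metric.ball_subset_ball (min_le_right _ _) (by simpa using hmem))) hpGN

lemma cylinder_subset {N : ℕ} {p : ℝ} (h0 : PrefVal N p) (h1 : PrefVal N (p - 1 / 4 ^ N)) :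
    Icc p (p + 1 / 4 ^ N) ⊆ GN := by
  intro y hy
  have h4 : (0:ℝ) < 4 ^ N := by positivity
  set t : ℝ := (y - p) * 4 ^ N with htdef
  have htm : t ∈ Icc (0:ℝ) 1 := by
    constructor
    · exact mul_nonneg (by linarith [hy.1]) h4.le
    · rw [htdef]
      calc (y - p) * 4 ^ N ≤ (1 / 4 ^ N) * 4 ^ N := by gcongr; linarith [hy.2]
      _ = 1 := by field_simp
  rcases zero_one_sub htm with h | h
  · have := concat h0 h
    have he : p + t / 4 ^ N = y := by rw [htdef]; field_simp; ring
    rwa [he] at this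
  · have := concat h1 h
    have he : p - 1 / 4 ^ N + (t + 1) / 4 ^ N = y := by rw [htdef]; field_simp; ring
    rwa [he] at this



def E : Set ℝ :=
  {x | ∃ b : ℕ → ℝ, (∀ n, b n ∈ ({0, 1, 2} : Set ℝ)) ∧ HasSum (fun n => b n / 4 ^ (n + 1)) x}

def Q4 : Set ℝ := ⋃ n : ℕ, Set.range (fun z : ℤ => (z : ℝ) / 4 ^ n)

lemma countable_Q4 : Q4.Countable :=
  countable_iUnion (fun _ => countable_range _)

lemma mu_succ (x : ℝ) (n : ℕ) : mu x (n + 1) = 4 * mu x n + dig x n := by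
  unfold dig; ring

lemma mu_le (x : ℝ) (n : ℕ) : (mu x n : ℝ) ≤ x * 4 ^ n := Int.floor_le _
lemma lt_mu (x : ℝ) (n : ℕ) : x * 4 ^ n < mu x n + 1 := Int.lt_floor_add_one _

/-- partial sums of canonical digits -/
lemma dig_psum (x : ℝ) (n : ℕ) :
    psum (fun k => (dig x k : ℝ)) n = (mu x n : ℝ) / 4 ^ n - (mu x 0 : ℝ) := by
  induction n with
  | zero => simp [psum, mu]
  | succ n ih =>
    rw [psum, Finset.sum_range_succ, ← psum, ih, mu_succ]
    push_cast
    field_simp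
    ring

lemma mu_div_tendsto (x : ℝ) : Tendsto (fun n => (mu x n : ℝ) / 4 ^ n) atTop (𝓝 x) := by
  have h0 : Tendsto (fun n : ℕ => x - (1/4:ℝ)^n) atTop (𝓝 (x - 0)) :=
    tendsto_const_nhds.sub (tendsto_pow_atTop_nhds_zero_of_lt_one (by norm_num) (by norm_num))
  rw [sub_zero] at h0
  apply tendsto_of_tendsto_of_tendsto_of_le_of_le h0 tendsto_const_nhds
  · intro n
    have h4 : (0:ℝ) < 4 ^ n := by positivity
    have hl := lt_mu x n
    show x - (1 / 4) ^ n ≤ (mu x n : ℝ) / 4 ^ n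
    rw [div_pow, one_pow, le_div_iff₀ h4]
    have he : (1 / 4 ^ n : ℝ) * 4 ^ n = 1 := by field_simp
    nlinarith
  · intro n
    have h4 : (0:ℝ) < 4 ^ n := by positivity
    show (mu x n : ℝ) / 4 ^ n ≤ x
    rw [div_le_iff₀ h4]
    exact mu_le x n

/-- a number in `[0,5/3]` whose canonical digits avoid `3` -/
lemma no3_mem_E {x : ℝ} (h3 : ∀ n, dig x n ≠ 3) : x - mu x 0 ∈ E := by
  refine ⟨fun n => (dig x n : ℝ), fun n => ?_, ?_⟩
  · show ((dig x n : ℝ)) ∈ ({0, 1, 2} : Set ℝ)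
    have h := dig_bounds x n
    have h' := h3 n
    have : dig x n = 0 ∨ dig x n = 1 ∨ dig x n = 2 := by omega
    rcases this with h|h|h <;> rw [h] <;> norm_num
  · rw [hasSum_iff_tendsto_nat_of_nonneg
      (fun n => div_nonneg (by exact_mod_cast (dig_bounds x n).1) (by positivity))]
    have : (fun n => ∑ i ∈ Finset.range n, (dig x i : ℝ) / 4 ^ (i + 1))
        = fun n => (mu x n : ℝ) / 4 ^ n - (mu x 0 : ℝ) := by
      funext n
      exact dig_psum x n
    rw [this]
    exact (mu_div_tendsto x).sub_const _

lemma psum_congr {g g' : ℕ → ℝ} {n : ℕ} (h : ∀ k < n, g k = g' k) : psum g n = psum g' n :=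
  Finset.sum_congr rfl (fun k hk => by rw [h k (Finset.mem_range.mp hk)])

lemma psum_succ (g : ℕ → ℝ) (n : ℕ) : psum g (n + 1) = psum g n + g n / 4 ^ (n + 1) :=
  Finset.sum_range_succ _ _

theorem frontier_subset_union : frontier GN ⊆ E ∪ (fun y => y + 1) '' E ∪ Q4 := by
  intro x hx
  have hxGN : x ∈ GN := isClosed_GN.frontier_subset hx
  by_cases hQ : x ∈ Q4
  · exact Or.inr hQ
  left
  by_cases h3 : ∃ n, dig x n = 3
  · exfalso
    -- x is in the interior, contradiction
    obtain ⟨a, ha⟩ := GN_iff.mp hxGN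
    obtain ⟨N, hN⟩ := h3
    have hc : cseq a x N = 0 := dig3_cseq ha hN
    have hAz : (Az a N : ℝ) = mu x N := by
      have h' : Az a N = mu x N := by unfold cseq at hc; omega
      exact_mod_cast h'
    -- two prefixes of length N+1
    have hp0 : PrefVal (N + 1) ((mu x (N+1) : ℝ) / 4 ^ (N+1)) := by
      classical
      refine ⟨fun k => if k < N then a k else ⟨2, by omega⟩, ?_⟩
      rw [psum_succ, psum_congr (g' := fun k => (q4 (a k) : ℝ)) (fun k hk => by simp [hk]),
        psum_eq, hAz]
      simp only [if_neg (lt_irrefl N)]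
      rw [mu_succ, hN]
      have : q4 ⟨2, by omega⟩ = 3 := by simp [q4]
      rw [this]
      push_cast
      field_simp
      ring
    have hp1 : PrefVal (N + 1) ((mu x (N+1) : ℝ) / 4 ^ (N+1) - 1 / 4 ^ (N+1)) := by
      classical
      refine ⟨fun k => if k < N then a k else ⟨1, by omega⟩, ?_⟩
      rw [psum_succ, psum_congr (g' := fun k => (q4 (a k) : ℝ)) (fun k hk => by simp [hk]),
        psum_eq, hAz]
      simp only [if_neg (lt_irrefl N)]
      rw [mu_succ, hN]
      have : q4 ⟨1, by omega⟩ = 2 := by simp [q4]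
      rw [this]
      push_cast
      field_simp
      ring
    have hcyl := cylinder_subset hp0 hp1
    -- x is in the open cylinder
    have hnotint : x * 4 ^ (N+1) ≠ (mu x (N+1) : ℝ) := by
      intro he
      apply hQ
      refine mem_iUnion.mpr ⟨N+1, ⟨mu x (N+1), ?_⟩⟩
      field_simp at he ⊢
      linarith [he]
    have hlt1 : (mu x (N+1) : ℝ) / 4 ^ (N+1) < x := by
      have hle : (mu x (N+1):ℝ) ≤ x * 4^(N+1) := mu_le x (N+1)
      have hne : (mu x (N+1):ℝ) ≠ x * 4^(N+1) := fun h => hnotint h.symm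
      rw [div_lt_iff₀ (by positivity)]
      exact lt_of_le_of_ne hle hne
    have hlt2 : x < (mu x (N+1) : ℝ) / 4 ^ (N+1) + 1 / 4 ^ (N+1) := by
      rw [← add_div, lt_div_iff₀ (by positivity)]
      exact lt_mu x (N+1)
    have : x ∈ interior GN :=
      interior_maximal (Ioo_subset_Icc_self.trans hcyl) isOpen_Ioo ⟨hlt1, hlt2⟩
    rw [frontier_eq_closure_inter_closure] at hx
    have hx2 := hx.2
    rw [closure_compl] at hx2
    exact hx2 this
  · push_neg at h3
    have hd : ∀ n, dig x n ≠ 3 := h3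
    have hE : x - mu x 0 ∈ E := no3_mem_E hd
    have hx0 := GN_subset hxGN
    have hmu : mu x 0 = 0 ∨ mu x 0 = 1 := by
      unfold mu
      simp only [pow_zero, mul_one]
      have h1 : (0:ℤ) ≤ ⌊x⌋ := Int.le_floor.mpr (by exact_mod_cast hx0.1)
      have h2 : ⌊x⌋ < 2 := Int.floor_lt.mpr (by push_cast; linarith [hx0.2])
      omega
    rcases hmu with h|h
    · left; rw [h] at hE; simpa using hE
    · right
      refine ⟨x - 1, ?_, by ring⟩
      rw [h] at hE
      simpa using hE



lemma E_iff {x : ℝ} : x ∈ E ↔ ∃ e : ℕ → Fin 3,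
    HasSum (fun n => ((e n : ℕ) : ℝ) / 4 ^ (n + 1)) x := by
  constructor
  · rintro ⟨b, hb, hsum⟩
    classical
    refine ⟨fun n => if b n = 0 then 0 else if b n = 1 then 1 else 2, ?_⟩
    convert hsum using 2 with n
    rcases hb n with h|h|h <;> simp_all <;> norm_num
  · rintro ⟨e, hsum⟩
    refine ⟨fun n => ((e n : ℕ) : ℝ), fun n => ?_, hsum⟩
    show (((e n : ℕ) : ℝ)) ∈ ({0, 1, 2} : Set ℝ)
    have : (e n : ℕ) = 0 ∨ (e n : ℕ) = 1 ∨ (e n : ℕ) = 2 := by omega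
    rcases this with h|h|h <;> rw [h] <;> norm_num

def sfun (e : ℕ → Fin 3) (n : ℕ) : ℕ := (∑ k ∈ Finset.range n, (e k : ℕ)) % 2

lemma sfun_zero (e : ℕ → Fin 3) : sfun e 0 = 0 := by simp [sfun]

lemma sfun_le (e : ℕ → Fin 3) (n : ℕ) : sfun e n ≤ 1 := by unfold sfun; omega

lemma sfun_succ (e : ℕ → Fin 3) (n : ℕ) : sfun e (n + 1) = (sfun e n + (e n : ℕ)) % 2 := by
  unfold sfun
  rw [Finset.sum_range_succ]
  omega

def alpha (e : ℕ → Fin 3) (n : ℕ) : Fin 4 :=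
  if sfun e n = 0 then (if (e n : ℕ) = 2 then 1 else 0)
  else (if (e n : ℕ) = 0 then 2 else 3)

lemma alpha_key (e : ℕ → Fin 3) (n : ℕ) :
    (q4 (alpha e n) : ℤ) = (e n : ℕ) + 4 * sfun e n - sfun e (n + 1) := by
  have he : (e n : ℕ) = 0 ∨ (e n : ℕ) = 1 ∨ (e n : ℕ) = 2 := by omega
  have hs : sfun e n = 0 ∨ sfun e n = 1 := by have := sfun_le e n; omega
  have hrec := sfun_succ e n
  unfold alpha
  rcases hs with h|h <;> rcases he with h'|h'|h' <;>
    simp [h, h', q4] at hrec ⊢ <;> omega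

lemma alpha_psum (e : ℕ → Fin 3) (n : ℕ) :
    psum (fun k => (q4 (alpha e k) : ℝ)) n
      = psum (fun k => ((e k : ℕ) : ℝ)) n - (sfun e n : ℝ) / 4 ^ n := by
  induction n with
  | zero => simp [psum, sfun_zero]
  | succ n ih =>
    rw [psum_succ, psum_succ, ih]
    have hk : (q4 (alpha e n) : ℝ) = ((e n : ℕ) : ℝ) + 4 * (sfun e n : ℝ) - (sfun e (n+1) : ℝ) := by
      exact_mod_cast congrArg (Int.cast : ℤ → ℝ) (alpha_key e n)
    rw [hk]
    field_simp
    ring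

lemma E_sub_GN : E ⊆ GN := by
  intro x hx
  obtain ⟨e, he⟩ := E_iff.mp hx
  rw [GN_iff]
  refine ⟨alpha e, ?_⟩
  rw [hasSum_iff_tendsto_nat_of_nonneg
    (fun n => div_nonneg (by exact_mod_cast q4_nonneg (alpha e n)) (by positivity))]
  have h1 : Tendsto (fun n => psum (fun k => ((e k : ℕ) : ℝ)) n) atTop (𝓝 x) :=
    he.tendsto_sum_nat
  have h2 : Tendsto (fun n => (sfun e n : ℝ) / 4 ^ n) atTop (𝓝 0) := by
    apply squeeze_zero (fun n => by positivity) (fun n => ?_)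
      (tendsto_pow_atTop_nhds_zero_of_lt_one (by norm_num) (by norm_num : (1/4:ℝ) < 1))
    have h4 : (0:ℝ) < 4 ^ n := by positivity
    rw [div_pow, one_pow, div_le_div_iff₀ h4 h4]
    have : (sfun e n : ℝ) ≤ 1 := by exact_mod_cast sfun_le e n
    nlinarith
  have h3 := h1.sub h2
  rw [sub_zero] at h3
  apply h3.congr'
  filter_upwards with n
  rw [← alpha_psum]
  rfl

/-- integer value of an `e`-prefix -/
def Ez (e : ℕ → Fin 3) : ℕ → ℤ
  | 0 => 0
  | n + 1 => 4 * Ez e n + (e n : ℕ)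

lemma Ez_succ (e : ℕ → Fin 3) (n : ℕ) : Ez e (n + 1) = 4 * Ez e n + (e n : ℕ) := rfl

lemma Ez_psum (e : ℕ → Fin 3) (n : ℕ) :
    psum (fun k => ((e k : ℕ) : ℝ)) n = (Ez e n : ℝ) / 4 ^ n := by
  induction n with
  | zero => simp [psum, Ez]
  | succ n ih =>
    rw [psum_succ, ih, Ez_succ]
    push_cast
    field_simp
    ring

lemma psum_le_bound {g : ℕ → ℝ} (hg : ∀ k, g k ≤ 2) (n : ℕ) :
    psum g n ≤ 2/3 - (2/3) * (1/4) ^ n := by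
  induction n with
  | zero => simp [psum]
  | succ n ih =>
    rw [psum_succ]
    have h4 : (0:ℝ) < 4 ^ (n+1) := by positivity
    have : g n / 4 ^ (n+1) ≤ 2 / 4 ^ (n+1) := by gcongr; exact hg n
    have he : (2:ℝ) / 4 ^ (n+1) = (2/3) * (1/4)^n - (2/3) * (1/4)^(n+1) := by
      rw [div_pow, div_pow, one_pow, one_pow, pow_succ]
      field_simp
      ring
    calc psum g n + g n / 4 ^ (n+1) ≤ (2/3 - (2/3) * (1/4)^n) + 2 / 4 ^ (n+1) := by linarith
    _ = 2/3 - (2/3) * (1/4)^(n+1) := by rw [he]; ring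

lemma psum_nonneg {g : ℕ → ℝ} (hg : ∀ k, 0 ≤ g k) (n : ℕ) : 0 ≤ psum g n :=
  Finset.sum_nonneg (fun k _ => div_nonneg (hg k) (by positivity))

/-- remainder of the explicit point at level `k` -/
def rem (e : ℕ → Fin 3) (m k : ℕ) : ℝ :=
  psum (fun j => ((e (k + j) : ℕ) : ℝ)) (m - k) + 3 / 4 ^ (m - k + 1)

lemma rem_zero (e : ℕ → Fin 3) (m : ℕ) :
    rem e m 0 = psum (fun j => ((e j : ℕ) : ℝ)) m + 3 / 4 ^ (m + 1) := by
  unfold rem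
  rw [Nat.sub_zero]
  congr 1
  exact psum_congr (fun k _ => by rw [Nat.zero_add])

lemma rem_last (e : ℕ → Fin 3) (m : ℕ) : rem e m m = 3 / 4 := by
  unfold rem
  rw [Nat.sub_self]
  simp [psum]

lemma rem_rec (e : ℕ → Fin 3) {m k : ℕ} (hk : k < m) :
    rem e m k = ((e k : ℕ) : ℝ) / 4 + rem e m (k + 1) / 4 := by
  unfold rem
  rw [show m - k = (m - (k+1)) + 1 from by omega]
  have hA : psum (fun j => ((e (k + j) : ℕ) : ℝ)) ((m - (k+1)) + 1)
      = ((e k : ℕ) : ℝ) / 4 + psum (fun j => ((e (k + 1 + j) : ℕ) : ℝ)) (m - (k+1)) / 4 := by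
    rw [psum, Finset.sum_range_succ', psum, Finset.sum_div, add_comm]
    congr 1
    · norm_num
    · apply Finset.sum_congr rfl
      intro j _
      show ((e (k + (j+1)) : ℕ) : ℝ) / 4 ^ (j + 1 + 1) = ((e (k + 1 + j) : ℕ) : ℝ) / 4 ^ (j+1) / 4
      rw [show k + (j+1) = k + 1 + j from by omega, div_div, ← pow_succ]
  have hB : (3:ℝ)/4^((m-(k+1))+1+1) = (3/4^((m-(k+1))+1))/4 := by
    rw [pow_succ, ← div_div]
  rw [hA, hB]
  ring

lemma rem_bounds (e : ℕ → Fin 3) {m k : ℕ} (hk : k ≤ m) :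
    0 ≤ rem e m k ∧ rem e m k < 1 := by
  constructor
  · exact add_nonneg (psum_nonneg (fun j => by positivity) _) (by positivity)
  · have h1 := psum_le_bound (g := fun j => ((e (k + j) : ℕ) : ℝ))
      (fun j => by
        show ((e (k + j) : ℕ) : ℝ) ≤ 2
        exact_mod_cast (by omega : (e (k+j) : ℕ) ≤ 2)) (m - k)
    have h2 : (3:ℝ) / 4 ^ (m - k + 1) = (3/4) * (1/4) ^ (m-k) := by
      rw [pow_succ, div_pow, one_pow]
      field_simp
    have h3 : (0:ℝ) < (1/4) ^ (m-k) := by positivity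
    have h4 : ((1:ℝ)/4) ^ (m-k) ≤ 1 := pow_le_one₀ (by norm_num) (by norm_num)
    unfold rem
    rw [h2]
    nlinarith

/-- THE DEATH LEMMA -/
lemma death {e : ℕ → Fin 3} {m : ℕ}
    (hodd : (∑ k ∈ Finset.range m, (e k : ℕ)) % 2 = 1) :
    psum (fun k => ((e k : ℕ) : ℝ)) m + 3 / 4 ^ (m + 1) ∉ GN := by
  intro hy
  set y := psum (fun k => ((e k : ℕ) : ℝ)) m + 3 / 4 ^ (m + 1) with hydef
  obtain ⟨a, ha⟩ := GN_iff.mp hy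
  have hsplit : ∀ k, k ≤ m → y * 4 ^ k = (Ez e k : ℝ) + rem e m k := by
    intro k hk
    induction k with
    | zero =>
      rw [rem_zero, ← hydef]
      simp [Ez]
    | succ k ihk =>
      have ih := ihk (by omega)
      have : y * 4 ^ (k+1) = (y * 4 ^ k) * 4 := by ring
      rw [this, ih, rem_rec e (by omega : k < m), Ez_succ]
      push_cast
      ring
  have hmu : ∀ k, k ≤ m → mu y k = Ez e k := by
    intro k hk
    unfold mu
    rw [hsplit k hk, add_comm, Int.floor_add_intCast]
    rw [Int.floor_eq_zero_iff.mpr ⟨(rem_bounds e hk).1, (rem_bounds e hk).2⟩]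
    ring
  have hdig : ∀ k, k < m → dig y k = ((e k : ℕ) : ℤ) := by
    intro k hk
    unfold dig
    rw [hmu k (by omega), hmu (k+1) (by omega), Ez_succ]
    ring
  have hno3 : ∀ k < m, dig y k ≠ 3 := by
    intro k hk
    rw [hdig k hk]
    have : (e k : ℕ) ≤ 2 := by omega
    omega
  have hpar := cseq_parity ha (n := m) hno3
  have hmu0 : mu y 0 = 0 := by
    have := hmu 0 (by omega)
    simpa [Ez] using this
  have hsum_dig : ∑ k ∈ Finset.range m, dig y k = ∑ k ∈ Finset.range m, ((e k : ℕ) : ℤ) :=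
    Finset.sum_congr rfl (fun k hk => hdig k (Finset.mem_range.mp hk))
  have hsum_cast : (∑ k ∈ Finset.range m, ((e k : ℕ) : ℤ)) % 2 = 1 := by
    have he2 : (∑ k ∈ Finset.range m, ((e k : ℕ) : ℤ))
        = ((∑ k ∈ Finset.range m, (e k : ℕ) : ℕ) : ℤ) := by
      push_cast
      rfl
    rw [he2]
    omega
  have hcm : cseq a y m = 1 := by
    have h01 := cseq_mem ha m
    rw [hmu0, hsum_dig] at hpar
    simp only [zero_add] at hpar
    omega
  have hR := (rep_remainder ha m).2.2
  have hAzm : (Az a m : ℝ) = (Ez e m : ℝ) - 1 := by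
    have h2 : Az a m = Ez e m - 1 := by
      have h1 : mu y m - Az a m = 1 := hcm
      have h3 := hmu m (le_refl m)
      omega
    exact_mod_cast h2
  rw [hsplit m (le_refl m), hAzm, rem_last] at hR
  linarith

/-- E is not in the interior: every point of E is a limit of non-members -/
lemma E_sub_closure_compl : E ⊆ closure GNᶜ := by
  intro x hx
  obtain ⟨e, he⟩ := E_iff.mp hx
  rw [Metric.mem_closure_iff]
  intro ε hε
  obtain ⟨n, hn⟩ := exists_pow_lt_of_lt_one (show (0:ℝ) < ε/2 by linarith)
    (show (1/4:ℝ) < 1 by norm_num)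
  rw [div_pow, one_pow] at hn
  have h4n : (0:ℝ) < 4 ^ n := by positivity
  set p := psum (fun k => ((e k : ℕ) : ℝ)) n with hp
  have htail := hasSum_shift he n
  have htail_ub : (x - p) * 4 ^ n ≤ 2/3 :=
    sum_le_of_le (c := 2) (fun k => by
      show ((e (n+k) : ℕ) : ℝ) ≤ 2
      exact_mod_cast (by omega : (e (n+k) : ℕ) ≤ 2)) htail
  have htail_lb : 0 ≤ (x - p) * 4 ^ n :=
    sum_nonneg' (fun k => by positivity) htail
  have hxp1 : 0 ≤ x - p := by nlinarith
  have hxp2 : x - p ≤ 1 / 4 ^ n := by rw [le_div_iff₀ h4n]; linarith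
  have e1 : (3:ℝ)/4^(n+1) = (3/4)*(1/4^n) := by rw [pow_succ]; ring
  have e2 : (1:ℝ)/4^(n+1) = (1/4)*(1/4^n) := by rw [pow_succ]; ring
  have e3 : (3:ℝ)/4^(n+2) = (3/16)*(1/4^n) := by
    rw [pow_add]
    norm_num
    ring
  have e4 : (2:ℝ)/4^n = 2*(1/4^n) := by ring
  have hupos : (0:ℝ) < 1/4^n := by positivity
  have hdist2 : (2:ℝ)/4^n < ε := by rw [e4]; linarith
  by_cases hpar : (∑ k ∈ Finset.range n, (e k : ℕ)) % 2 = 1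
  · refine ⟨p + 3 / 4 ^ (n+1), death hpar, ?_⟩
    rw [Real.dist_eq]
    have h1 : |x - (p + 3 / 4 ^ (n+1))| ≤ 2 / 4 ^ n := by
      rw [abs_le]
      constructor
      · rw [e1, e4]; linarith
      · rw [e1, e4]; linarith
    linarith
  · classical
    set e' : ℕ → Fin 3 := fun k => if k = n then 1 else e k with he'
    have hodd : (∑ k ∈ Finset.range (n+1), (e' k : ℕ)) % 2 = 1 := by
      rw [Finset.sum_range_succ]
      have h1 : ∑ k ∈ Finset.range n, (e' k : ℕ) = ∑ k ∈ Finset.range n, (e k : ℕ) :=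
        Finset.sum_congr rfl (fun k hk => by
          have : k ≠ n := by have := Finset.mem_range.mp hk; omega
          simp [he', this])
      rw [h1]
      have h2 : (e' n : ℕ) = 1 := by simp [he']
      rw [h2]
      omega
    have hpsum' : psum (fun k => ((e' k : ℕ) : ℝ)) (n+1) = p + 1 / 4 ^ (n+1) := by
      rw [psum_succ]
      congr 1
      · apply psum_congr
        intro k hk
        have : k ≠ n := by omega
        simp [he', this]
      · have h2 : (e' n : ℕ) = 1 := by simp [he']
        rw [h2]
        norm_num
    refine ⟨psum (fun k => ((e' k : ℕ) : ℝ)) (n+1) + 3 / 4 ^ (n+1+1), death hodd, ?_⟩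
    rw [hpsum', Real.dist_eq]
    have h1 : |x - (p + 1 / 4 ^ (n+1) + 3 / 4 ^ (n+2))| ≤ 2 / 4 ^ n := by
      rw [abs_le]
      constructor
      · rw [e2, e3, e4]; linarith
      · rw [e2, e3, e4]; linarith
    have h2 : p + 1 / 4 ^ (n+1) + 3 / 4 ^ (n+1+1) = p + 1 / 4 ^ (n+1) + 3 / 4 ^ (n+2) := by
      norm_num
    rw [h2]
    linarith

lemma E_sub_frontier : E ⊆ frontier GN := by
  intro x hx
  rw [frontier_eq_closure_inter_closure]
  exact ⟨subset_closure (E_sub_GN hx), E_sub_closure_compl hx⟩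



/-- the dimension value -/
def dd : ℝ := Real.log 3 / Real.log 4

lemma log4_pos : (0:ℝ) < Real.log 4 := Real.log_pos (by norm_num)
lemma log3_pos : (0:ℝ) < Real.log 3 := Real.log_pos (by norm_num)

lemma dd_pos : 0 < dd := div_pos log3_pos log4_pos

lemma dd_le_one : dd ≤ 1 :=
  (div_le_one log4_pos).mpr (Real.log_le_log (by norm_num) (by norm_num))

lemma four_rpow_dd : (4:ℝ) ^ dd = 3 := by
  rw [Real.rpow_def_of_pos (by norm_num), dd]
  have h : Real.log 4 * (Real.log 3 / Real.log 4) = Real.log 3 := by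
    field_simp
  rw [h]
  exact Real.exp_log (by norm_num)

lemma quarter_rpow_dd : ((1:ℝ)/4) ^ dd = 1/3 := by
  rw [one_div, one_div, Real.inv_rpow (by norm_num), four_rpow_dd]

lemma quarter_pow_rpow (N : ℕ) : (((1:ℝ)/4) ^ N) ^ dd = ((1:ℝ)/3) ^ N := by
  rw [← Real.rpow_natCast ((1:ℝ)/4) N, ← Real.rpow_mul (by norm_num), mul_comm,
    Real.rpow_mul (by norm_num), quarter_rpow_dd, Real.rpow_natCast]

-- base 3 material
def psum3 (g : ℕ → ℝ) (n : ℕ) : ℝ := ∑ k ∈ Finset.range n, g k / 3 ^ (k + 1)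

lemma hasSum_geom_digit3 (c : ℝ) : HasSum (fun n => c / 3 ^ (n + 1)) (c / 2) := by
  have h : HasSum (fun n : ℕ => (1/3 : ℝ) ^ n) ((1 - 1/3)⁻¹) :=
    hasSum_geometric_of_lt_one (by norm_num) (by norm_num)
  have h2 := h.mul_left (c / 3)
  have e1 : (fun n : ℕ => c / 3 * (1/3) ^ n) = fun n : ℕ => c / 3 ^ (n + 1) := by
    funext n
    rw [pow_succ, one_div, inv_pow, div_mul_eq_mul_div,
      div_eq_div_iff (by positivity) (by positivity)]
    field_simp
  have e2 : c / 3 * (1 - 1/3 : ℝ)⁻¹ = c / 2 := by ring_nf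
  rwa [e1, e2] at h2

lemma sum3_le_of_le {g : ℕ → ℝ} {x c : ℝ} (hg : ∀ n, g n ≤ c)
    (hx : HasSum (fun n => g n / 3 ^ (n + 1)) x) : x ≤ c / 2 :=
  hasSum_le (fun n => by gcongr; exact hg n) hx (hasSum_geom_digit3 c)

lemma sum3_nonneg {g : ℕ → ℝ} {x : ℝ} (hg : ∀ n, 0 ≤ g n)
    (hx : HasSum (fun n => g n / 3 ^ (n + 1)) x) : 0 ≤ x :=
  hasSum_le (fun n => div_nonneg (hg n) (by positivity)) hasSum_zero hx

lemma hasSum_shift3 {g : ℕ → ℝ} {x : ℝ} (hx : HasSum (fun n => g n / 3 ^ (n + 1)) x) (n : ℕ) :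
    HasSum (fun k => g (n + k) / 3 ^ (k + 1)) ((x - psum3 g n) * 3 ^ n) := by
  have h0 : HasSum (fun m => g m / 3 ^ (m + 1))
      ((x - psum3 g n) + ∑ i ∈ Finset.range n, g i / 3 ^ (i + 1)) := by
    simpa [psum3] using hx
  have h1 := (hasSum_nat_add_iff n).mpr h0
  have h2 := h1.mul_right ((3:ℝ) ^ n)
  convert h2 using 2 with k
  · rfl
  rw [add_comm n k]
  rw [div_mul_eq_mul_div, div_eq_div_iff (by positivity) (by positivity)]
  ring

lemma summable3 {g : ℕ → ℝ} (h0 : ∀ n, 0 ≤ g n) (h2 : ∀ n, g n ≤ 2) :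
    Summable (fun n => g n / 3 ^ (n + 1)) :=
  Summable.of_nonneg_of_le (fun n => div_nonneg (h0 n) (by positivity))
    (fun n => by gcongr; exact h2 n) (hasSum_geom_digit3 2).summable

-- digit membership helpers
lemma Emem_nonneg {b : ℕ → ℝ} (hb : ∀ n, b n ∈ ({0, 1, 2} : Set ℝ)) (n : ℕ) : 0 ≤ b n := by
  rcases hb n with h|h|h <;> rw [h] <;> norm_num

lemma Emem_le {b : ℕ → ℝ} (hb : ∀ n, b n ∈ ({0, 1, 2} : Set ℝ)) (n : ℕ) : b n ≤ 2 := by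
  rcases hb n with h|h|h <;> rw [h] <;> norm_num

lemma Emem_gap {b c : ℝ} (hb : b ∈ ({0, 1, 2} : Set ℝ)) (hc : c ∈ ({0, 1, 2} : Set ℝ))
    (hne : b ≠ c) : 1 ≤ |b - c| := by
  simp only [mem_insert_iff, mem_singleton_iff] at hb hc
  rcases hb with h|h|h <;> rcases hc with h'|h'|h' <;> subst h <;> subst h' <;>
    first
      | exact absurd rfl hne
      | (rw [le_abs]; norm_num)

/-- remainder bounds for an E-representation -/
lemma E_tail {b : ℕ → ℝ} {x : ℝ} (hb : ∀ n, b n ∈ ({0, 1, 2} : Set ℝ))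
    (hx : HasSum (fun n => b n / 4 ^ (n + 1)) x) (n : ℕ) :
    0 ≤ (x - psum b n) * 4 ^ n ∧ (x - psum b n) * 4 ^ n ≤ 2/3 := by
  have h := hasSum_shift hx n
  exact ⟨sum_nonneg' (fun k => Emem_nonneg hb _) h,
    sum_le_of_le (c := 2) (fun k => Emem_le hb _) h⟩

/-- digits in E are unique -/
lemma E_digits_unique {b c : ℕ → ℝ} {x : ℝ}
    (hb : ∀ n, b n ∈ ({0, 1, 2} : Set ℝ)) (hc : ∀ n, c n ∈ ({0, 1, 2} : Set ℝ))
    (hxb : HasSum (fun n => b n / 4 ^ (n + 1)) x)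
    (hxc : HasSum (fun n => c n / 4 ^ (n + 1)) x) : b = c := by
  classical
  by_contra hne
  have hex : ∃ n, b n ≠ c n := by
    by_contra h
    push_neg at h
    exact hne (funext h)
  set N := Nat.find hex with hN
  have hbn : b N ≠ c N := Nat.find_spec hex
  have hpre : ∀ k < N, b k = c k := fun k hk => by
    by_contra h
    exact Nat.find_min hex hk h
  have hpsum : psum b N = psum c N := psum_congr (fun k hk => by rw [hpre k hk])
  have hpsumS : psum b (N+1) - psum c (N+1) = (b N - c N) / 4 ^ (N+1) := by
    rw [psum_succ, psum_succ, hpsum]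
    ring
  have htb := E_tail hb hxb (N+1)
  have htc := E_tail hc hxc (N+1)
  have h4 : (0:ℝ) < 4 ^ (N+1) := by positivity
  have hkey : (b N - c N) + ((x - psum b (N+1)) * 4^(N+1) - (x - psum c (N+1)) * 4^(N+1)) = 0 := by
    have : (x - psum b (N+1)) * 4^(N+1) - (x - psum c (N+1)) * 4^(N+1)
        = (psum c (N+1) - psum b (N+1)) * 4^(N+1) := by ring
    rw [this]
    have h2 : psum c (N+1) - psum b (N+1) = -((b N - c N) / 4^(N+1)) := by
      rw [← hpsumS]; ring
    rw [h2]
    field_simp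
    ring
  have habs := Emem_gap (hb N) (hc N) hbn
  have hv1 : -(2/3 : ℝ) ≤ (x - psum b (N+1)) * 4^(N+1) - (x - psum c (N+1)) * 4^(N+1) := by
    linarith [htb.1, htb.2, htc.1, htc.2]
  have hv2 : (x - psum b (N+1)) * 4^(N+1) - (x - psum c (N+1)) * 4^(N+1) ≤ 2/3 := by
    linarith [htb.1, htb.2, htc.1, htc.2]
  have : |b N - c N| ≤ 2/3 := by
    rw [abs_le]
    constructor <;> linarith
  linarith

open scoped Classical in
/-- the Hölder map: reads digits base 4, writes them base 3 -/
def hmap (x : ℝ) : ℝ :=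
  if hx : x ∈ E then ∑' n, hx.choose n / 3 ^ (n + 1) else 0

lemma hmap_eq {x : ℝ} {b : ℕ → ℝ} (hb : ∀ n, b n ∈ ({0, 1, 2} : Set ℝ))
    (hx : HasSum (fun n => b n / 4 ^ (n + 1)) x) :
    hmap x = ∑' n, b n / 3 ^ (n + 1) := by
  have hxE : x ∈ E := ⟨b, hb, hx⟩
  classical
  rw [hmap, dif_pos hxE]
  have hspec := hxE.choose_spec
  have : hxE.choose = b := E_digits_unique hspec.1 hb hspec.2 hx
  rw [this]

set_option maxHeartbeats 1000000 in
/-- Hölder estimate -/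
lemma hmap_holder {x y : ℝ} (hx : x ∈ E) (hy : y ∈ E) :
    |hmap x - hmap y| ≤ 9 * |x - y| ^ dd := by
  obtain ⟨b, hb, hxb⟩ := hx
  obtain ⟨c, hc, hyc⟩ := hy
  rcases eq_or_ne b c with rfl | hne
  · have : x = y := hxb.unique hyc
    rw [this, sub_self, abs_zero]
    positivity
  classical
  have hex : ∃ n, b n ≠ c n := by
    by_contra h
    push_neg at h
    exact hne (funext h)
  set N := Nat.find hex with hN
  have hpre : ∀ k < N, b k = c k := fun k hk => by
    by_contra h
    exact Nat.find_min hex hk h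
  -- abbreviations for scaled tails
  have hpsum : psum b N = psum c N := psum_congr (fun k hk => by rw [hpre k hk])
  have hpsumS : psum b (N + 1) - psum c (N + 1) = (b N - c N) / 4 ^ (N + 1) := by
    rw [psum_succ, psum_succ, hpsum]
    ring
  have htb1 := E_tail hb hxb (N+1)
  have htc1 := E_tail hc hyc (N+1)
  have hgap := Emem_gap (hb N) (hc N) (Nat.find_spec hex)
  have h4 : (0:ℝ) < 4 ^ (N+1) := by positivity
  -- lower bound for |x - y|
  have hmul : (x - y) * 4^(N+1) = (b N - c N)
      + ((x - psum b (N+1)) * 4^(N+1) - (y - psum c (N+1)) * 4^(N+1)) := by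
    have h5 : (psum b (N+1) - psum c (N+1)) * 4^(N+1) = b N - c N := by
      rw [hpsumS]
      field_simp
    linear_combination h5
  have hv1 : -(2/3 : ℝ) ≤ (x - psum b (N+1)) * 4^(N+1) - (y - psum c (N+1)) * 4^(N+1) := by
    linarith [htb1.1, htb1.2, htc1.1, htc1.2]
  have hv2 : (x - psum b (N+1)) * 4^(N+1) - (y - psum c (N+1)) * 4^(N+1) ≤ (2/3 : ℝ) := by
    linarith [htb1.1, htb1.2, htc1.1, htc1.2]
  have habs2 : (1/3 : ℝ) ≤ |(x - y) * 4^(N+1)| := by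
    rw [hmul]
    rcases le_abs.mp hgap with hg | hg
    · calc (1/3 : ℝ) ≤ (b N - c N)
          + ((x - psum b (N+1)) * 4^(N+1) - (y - psum c (N+1)) * 4^(N+1)) := by linarith
      _ ≤ |(b N - c N) + ((x - psum b (N+1)) * 4^(N+1) - (y - psum c (N+1)) * 4^(N+1))| :=
          le_abs_self _
    · calc (1/3 : ℝ) ≤ -((b N - c N)
          + ((x - psum b (N+1)) * 4^(N+1) - (y - psum c (N+1)) * 4^(N+1))) := by linarith
      _ ≤ |(b N - c N) + ((x - psum b (N+1)) * 4^(N+1) - (y - psum c (N+1)) * 4^(N+1))| :=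
          neg_le_abs _
  have hlow : (1/4 : ℝ)^(N+1) ≤ 3 * |x - y| := by
    rw [abs_mul, abs_of_pos h4] at habs2
    rw [div_pow, one_pow, div_le_iff₀ h4]
    nlinarith [habs2]
  -- upper bound for |hmap x - hmap y|
  have hhx : hmap x = ∑' n, b n / 3 ^ (n + 1) := hmap_eq hb hxb
  have hhy : hmap y = ∑' n, c n / 3 ^ (n + 1) := hmap_eq hc hyc
  have hsb : HasSum (fun n => b n / 3 ^ (n + 1)) (∑' n, b n / 3 ^ (n + 1)) :=
    (summable3 (Emem_nonneg hb) (Emem_le hb)).hasSum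
  have hsc : HasSum (fun n => c n / 3 ^ (n + 1)) (∑' n, c n / 3 ^ (n + 1)) :=
    (summable3 (Emem_nonneg hc) (Emem_le hc)).hasSum
  have htb3 := hasSum_shift3 hsb N
  have htc3 := hasSum_shift3 hsc N
  have hTb0 : 0 ≤ ((∑' n, b n / 3 ^ (n + 1)) - psum3 b N) * 3 ^ N :=
    sum3_nonneg (fun k => Emem_nonneg hb _) htb3
  have hTb1 : ((∑' n, b n / 3 ^ (n + 1)) - psum3 b N) * 3 ^ N ≤ 1 := by
    have := sum3_le_of_le (c := 2) (fun k => Emem_le hb _) htb3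
    linarith
  have hTc0 : 0 ≤ ((∑' n, c n / 3 ^ (n + 1)) - psum3 c N) * 3 ^ N :=
    sum3_nonneg (fun k => Emem_nonneg hc _) htc3
  have hTc1 : ((∑' n, c n / 3 ^ (n + 1)) - psum3 c N) * 3 ^ N ≤ 1 := by
    have := sum3_le_of_le (c := 2) (fun k => Emem_le hc _) htc3
    linarith
  have hpsum3 : psum3 b N = psum3 c N :=
    Finset.sum_congr rfl (fun k hk => by rw [hpre k (Finset.mem_range.mp hk)])
  have h3N : (0:ℝ) < 3 ^ N := by positivity
  have hup : |hmap x - hmap y| ≤ (1/3 : ℝ)^N := by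
    rw [hhx, hhy]
    have hd : (∑' n, b n / 3 ^ (n + 1)) - (∑' n, c n / 3 ^ (n + 1))
        = (((∑' n, b n / 3 ^ (n + 1)) - psum3 b N) * 3 ^ N
          - ((∑' n, c n / 3 ^ (n + 1)) - psum3 c N) * 3 ^ N) / 3 ^ N := by
      rw [hpsum3]
      field_simp
      ring
    rw [hd, abs_div, abs_of_pos h3N, div_pow, one_pow, div_le_div_iff₀ h3N h3N]
    have : |((∑' n, b n / 3 ^ (n + 1)) - psum3 b N) * 3 ^ N
        - ((∑' n, c n / 3 ^ (n + 1)) - psum3 c N) * 3 ^ N| ≤ 1 := by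
      rw [abs_le]
      constructor <;> linarith
    nlinarith
  -- combine
  have hxy0 : (0:ℝ) ≤ |x - y| := abs_nonneg _
  have hq : ((1/4 : ℝ)^(N+1)) ^ dd ≤ (3 * |x - y|) ^ dd :=
    Real.rpow_le_rpow (by positivity) hlow dd_pos.le
  rw [quarter_pow_rpow] at hq
  have hmulr : (3 * |x - y|) ^ dd = 3 ^ dd * |x - y| ^ dd :=
    Real.mul_rpow (by norm_num) hxy0
  have h3dd : (3:ℝ) ^ dd ≤ 3 := by
    calc (3:ℝ) ^ dd ≤ 3 ^ (1:ℝ) := Real.rpow_le_rpow_of_exponent_le (by norm_num) dd_le_one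
    _ = 3 := Real.rpow_one 3
  have hrnn : (0:ℝ) ≤ |x - y| ^ dd := Real.rpow_nonneg hxy0 dd
  have hstep : (1/3 : ℝ)^N = 3 * (1/3 : ℝ)^(N+1) := by
    rw [pow_succ]
    ring
  calc |hmap x - hmap y| ≤ (1/3 : ℝ)^N := hup
  _ = 3 * (1/3 : ℝ)^(N+1) := hstep
  _ ≤ 3 * (3 ^ dd * |x - y| ^ dd) := by rw [← hmulr]; nlinarith [hq]
  _ ≤ 3 * (3 * |x - y| ^ dd) := by nlinarith [h3dd, hrnn]
  _ = 9 * |x - y| ^ dd := by ring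



/-- base-3 canonical digits -/
def mu3 (y : ℝ) (n : ℕ) : ℤ := ⌊y * 3 ^ n⌋
def tdig (y : ℝ) (n : ℕ) : ℤ := mu3 y (n + 1) - 3 * mu3 y n

lemma tdig_bounds (y : ℝ) (n : ℕ) : 0 ≤ tdig y n ∧ tdig y n ≤ 2 := by
  have h1 : y * 3 ^ (n + 1) = y * 3 ^ n * 3 := by ring
  have h2 : (3 * ⌊y * 3 ^ n⌋ : ℤ) ≤ ⌊y * 3 ^ (n + 1)⌋ := by
    rw [h1]
    apply Int.le_floor.mpr
    push_cast
    nlinarith [Int.floor_le (y * 3 ^ n)]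
  have h3 : ⌊y * 3 ^ (n + 1)⌋ < 3 * ⌊y * 3 ^ n⌋ + 3 := by
    rw [h1]
    apply Int.floor_lt.mpr
    push_cast
    nlinarith [Int.lt_floor_add_one (y * 3 ^ n)]
  unfold tdig mu3
  omega

lemma tdig_psum (y : ℝ) (n : ℕ) :
    psum3 (fun k => (tdig y k : ℝ)) n = (mu3 y n : ℝ) / 3 ^ n - (mu3 y 0 : ℝ) := by
  induction n with
  | zero => simp [psum3, mu3]
  | succ n ih =>
    rw [psum3, Finset.sum_range_succ, ← psum3, ih]
    have : mu3 y (n+1) = 3 * mu3 y n + tdig y n := by unfold tdig; ring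
    rw [this]
    push_cast
    field_simp
    ring

lemma mu3_div_tendsto (y : ℝ) : Tendsto (fun n => (mu3 y n : ℝ) / 3 ^ n) atTop (𝓝 y) := by
  have h0 : Tendsto (fun n : ℕ => y - (1/3:ℝ)^n) atTop (𝓝 (y - 0)) :=
    tendsto_const_nhds.sub (tendsto_pow_atTop_nhds_zero_of_lt_one (by norm_num) (by norm_num))
  rw [sub_zero] at h0
  apply tendsto_of_tendsto_of_tendsto_of_le_of_le h0 tendsto_const_nhds
  · intro n
    have h3 : (0:ℝ) < 3 ^ n := by positivity
    have hl := Int.lt_floor_add_one (y * 3 ^ n)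
    show y - (1 / 3) ^ n ≤ (mu3 y n : ℝ) / 3 ^ n
    rw [div_pow, one_pow, le_div_iff₀ h3]
    have he : (1 / 3 ^ n : ℝ) * 3 ^ n = 1 := by field_simp
    unfold mu3
    nlinarith
  · intro n
    have h3 : (0:ℝ) < 3 ^ n := by positivity
    show (mu3 y n : ℝ) / 3 ^ n ≤ y
    rw [div_le_iff₀ h3]
    exact Int.floor_le _

lemma hasSum_tdig {y : ℝ} (hy : y ∈ Ioo (0:ℝ) 1) :
    HasSum (fun n => (tdig y n : ℝ) / 3 ^ (n + 1)) y := by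
  have hmu0 : mu3 y 0 = 0 := by
    unfold mu3
    simp only [pow_zero, mul_one]
    rw [Int.floor_eq_zero_iff.mpr ⟨hy.1.le, hy.2⟩]
  rw [hasSum_iff_tendsto_nat_of_nonneg
    (fun n => div_nonneg (by exact_mod_cast (tdig_bounds y n).1) (by positivity))]
  have he : (fun n => ∑ i ∈ Finset.range n, (tdig y i : ℝ) / 3 ^ (i + 1))
      = fun n => (mu3 y n : ℝ) / 3 ^ n - (mu3 y 0 : ℝ) := by
    funext n
    exact tdig_psum y n
  rw [he, hmu0]
  simpa using mu3_div_tendsto y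

lemma hmap_surj : Ioo (0:ℝ) 1 ⊆ hmap '' E := by
  intro y hy
  set b : ℕ → ℝ := fun n => (tdig y n : ℝ) with hb
  have hbmem : ∀ n, b n ∈ ({0, 1, 2} : Set ℝ) := by
    intro n
    have h := tdig_bounds y n
    have : tdig y n = 0 ∨ tdig y n = 1 ∨ tdig y n = 2 := by omega
    rcases this with h'|h'|h' <;> rw [hb] <;> simp only [h'] <;> norm_num
  have hsum4 : Summable (fun n => b n / 4 ^ (n + 1)) :=
    Summable.of_nonneg_of_le (fun n => div_nonneg (Emem_nonneg hbmem n) (by positivity))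
      (fun n => by gcongr; exact Emem_le hbmem n) (hasSum_geom_digit 2).summable
  set x : ℝ := ∑' n, b n / 4 ^ (n + 1) with hx
  have hxE : x ∈ E := ⟨b, hbmem, hsum4.hasSum⟩
  refine ⟨x, hxE, ?_⟩
  rw [hmap_eq hbmem hsum4.hasSum]
  exact ((hasSum_tdig hy).tsum_eq)

lemma holderOnWith_hmap : HolderOnWith 9 dd.toNNReal hmap E := by
  intro x hx y hy
  rcases eq_or_ne x y with rfl | hne
  · simp
  have hd : (0:ℝ) < |x - y| := abs_pos.mpr (sub_ne_zero.mpr hne)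
  have hcoe : ((dd.toNNReal : ℝ≥0) : ℝ) = dd := Real.coe_toNNReal _ dd_pos.le
  rw [edist_dist, edist_dist, Real.dist_eq, Real.dist_eq]
  have h1 : ENNReal.ofReal |x - y| ^ ((dd.toNNReal : ℝ≥0) : ℝ)
      = ENNReal.ofReal (|x - y| ^ dd) := by
    rw [hcoe, ENNReal.ofReal_rpow_of_pos hd]
  rw [h1]
  calc ENNReal.ofReal |hmap x - hmap y| ≤ ENNReal.ofReal (9 * |x - y| ^ dd) :=
      ENNReal.ofReal_le_ofReal (hmap_holder hx hy)
  _ = ENNReal.ofReal 9 * ENNReal.ofReal (|x - y| ^ dd) :=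
      ENNReal.ofReal_mul (by norm_num)
  _ = ((9:ℝ≥0) : ℝ≥0∞) * ENNReal.ofReal (|x - y| ^ dd) := by
      rw [ENNReal.ofReal_ofNat, ENNReal.coe_ofNat]

lemma dimH_Ioo : dimH (Ioo (0:ℝ) 1) = 1 := by
  have h := Real.dimH_of_mem_nhds (x := (1/2 : ℝ)) (s := Ioo (0:ℝ) 1)
    (Ioo_mem_nhds (by norm_num) (by norm_num))
  simpa using h

lemma dimH_E_ge : ENNReal.ofReal dd ≤ dimH E := by
  have h1 : dimH (hmap '' E) ≤ dimH E / (dd.toNNReal : ℝ≥0∞) :=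
    holderOnWith_hmap.dimH_image_le (Real.toNNReal_pos.mpr dd_pos)
  have h2 : (1 : ℝ≥0∞) ≤ dimH (hmap '' E) := by
    rw [← dimH_Ioo]
    exact dimH_mono hmap_surj
  have h3 : (1 : ℝ≥0∞) ≤ dimH E / (dd.toNNReal : ℝ≥0∞) := le_trans h2 h1
  have hne0 : ((dd.toNNReal : ℝ≥0∞)) ≠ 0 := by
    simp only [ne_eq, ENNReal.coe_eq_zero]
    exact ne_of_gt (Real.toNNReal_pos.mpr dd_pos)
  have hnetop : ((dd.toNNReal : ℝ≥0∞)) ≠ ⊤ := ENNReal.coe_ne_top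
  have h4 := (ENNReal.le_div_iff_mul_le (Or.inl hne0) (Or.inl hnetop)).mp h3
  rw [one_mul] at h4
  rwa [ENNReal.ofReal]

/-- value of a finite Fin-3-digit word -/
def wval (n : ℕ) (f : Fin n → Fin 3) : ℝ :=
  ∑ k : Fin n, ((f k : ℕ) : ℝ) / 4 ^ ((k : ℕ) + 1)

lemma dimH_E_le : dimH E ≤ ENNReal.ofReal dd := by
  classical
  -- covering sets
  set t : ∀ n : ℕ, (Fin n → Fin 3) → Set ℝ :=
    fun n f => Icc (wval n f) (wval n f + (2/3) / 4 ^ n) with ht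
  have hdiam : ∀ n f, EMetric.diam (t n f) = ENNReal.ofReal ((2/3) / 4 ^ n) := by
    intro n f
    rw [ht]
    simp only
    rw [EMetric.diam, Real.ediam_Icc]
    congr 1
    ring
  have hcover : ∀ n : ℕ, E ⊆ ⋃ f : Fin n → Fin 3, t n f := by
    intro n x hx
    obtain ⟨b, hb, hsum⟩ := hx
    set f : Fin n → Fin 3 := fun k => if b (k : ℕ) = 0 then 0 else if b (k : ℕ) = 1 then 1 else 2
      with hf
    have hval : wval n f = psum b n := by
      rw [wval, psum, ← Fin.sum_univ_eq_sum_range]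
      apply Finset.sum_congr rfl
      intro k _
      congr 1
      rcases hb (k : ℕ) with h|h|h
      · have h' : b (k : ℕ) = 0 := h
        norm_num [hf, h']
      · have h' : b (k : ℕ) = 1 := h
        norm_num [hf, h']
      · have h' : b (k : ℕ) = 2 := h
        norm_num [hf, h']
    refine mem_iUnion.mpr ⟨f, ?_⟩
    rw [ht]
    simp only
    rw [hval]
    have hT := E_tail hb hsum n
    have h4 : (0:ℝ) < 4 ^ n := by positivity
    constructor
    · nlinarith [hT.1]
    · have h2 : x - psum b n ≤ 2/3/4^n := by
        rw [le_div_iff₀ h4]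
        linarith [hT.2]
      linarith
  have hr : Tendsto (fun n : ℕ => ENNReal.ofReal ((2/3) / 4 ^ n)) atTop (𝓝 0) := by
    rw [← ENNReal.ofReal_zero]
    apply ENNReal.tendsto_ofReal
    have he : (fun n : ℕ => (2/3 : ℝ) / 4 ^ n) = fun n : ℕ => (2/3 : ℝ) * (1/4) ^ n := by
      funext n
      rw [div_pow, one_pow]
      ring
    rw [he]
    have := (tendsto_pow_atTop_nhds_zero_of_lt_one (by norm_num : (0:ℝ) ≤ 1/4)
      (by norm_num : (1/4:ℝ) < 1)).const_mul (2/3 : ℝ)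
    simpa using this
  have hsum_eq : ∀ n : ℕ, (∑ f : Fin n → Fin 3, EMetric.diam (t n f) ^ dd)
      = ENNReal.ofReal ((2/3) ^ dd) := by
    intro n
    have hpos : (0:ℝ) < (2/3) / 4 ^ n := by positivity
    have hrpow : (ENNReal.ofReal ((2/3) / 4 ^ n)) ^ dd
        = ENNReal.ofReal ((2/3) ^ dd * (1/3 : ℝ) ^ n) := by
      rw [ENNReal.ofReal_rpow_of_pos hpos]
      congr 1
      have he : (2/3 : ℝ) / 4 ^ n = (2/3) * (1/4) ^ n := by
        rw [div_pow, one_pow]; ring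
      rw [he, Real.mul_rpow (by norm_num) (by positivity), quarter_pow_rpow]
    have hconst : ∀ f : Fin n → Fin 3, EMetric.diam (t n f) ^ dd
        = ENNReal.ofReal ((2/3) ^ dd * (1/3 : ℝ) ^ n) := fun f => by rw [hdiam n f, hrpow]
    rw [Finset.sum_congr rfl (fun f _ => hconst f), Finset.sum_const]
    rw [Finset.card_univ]
    have hcard : Fintype.card (Fin n → Fin 3) = 3 ^ n := by
      rw [Fintype.card_fun]
      simp
    rw [hcard, nsmul_eq_mul]
    rw [← ENNReal.ofReal_natCast (3 ^ n), ← ENNReal.ofReal_mul (by positivity)]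
    congr 1
    push_cast
    have h31 : (3:ℝ) ^ n * (1/3 : ℝ) ^ n = 1 := by
      rw [← mul_pow]
      norm_num
    linear_combination (2/3:ℝ) ^ dd * h31
  have hle := MeasureTheory.Measure.hausdorffMeasure_le_liminf_sum dd E
    (fun n : ℕ => ENNReal.ofReal ((2/3) / 4 ^ n)) hr t
    (Eventually.of_forall (fun n => fun f => le_of_eq (hdiam n f)))
    (Eventually.of_forall hcover)
  have hliminf : (Filter.liminf (fun n : ℕ => ∑ f : Fin n → Fin 3, EMetric.diam (t n f) ^ dd)
      atTop) = ENNReal.ofReal ((2/3) ^ dd) := by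
    have he : (fun n : ℕ => ∑ f : Fin n → Fin 3, EMetric.diam (t n f) ^ dd)
        = fun _ : ℕ => ENNReal.ofReal ((2/3) ^ dd) := funext hsum_eq
    rw [he, liminf_const]
  have hfin : MeasureTheory.Measure.hausdorffMeasure ((dd.toNNReal : ℝ≥0) : ℝ) E ≠ ⊤ := by
    rw [Real.coe_toNNReal _ dd_pos.le]
    exact ne_top_of_le_ne_top ENNReal.ofReal_ne_top (hle.trans_eq hliminf)
  have hres := dimH_le_of_hausdorffMeasure_ne_top hfin
  rwa [ENNReal.ofReal]

lemma isometry_addOne : Isometry (fun y : ℝ => y + 1) := by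
  intro x y
  simp [edist_dist, Real.dist_eq]

lemma dimH_E_eq : dimH E = ENNReal.ofReal dd := le_antisymm dimH_E_le dimH_E_ge

theorem dimH_frontier : dimH (frontier GN) = ENNReal.ofReal dd := by
  apply le_antisymm
  · calc dimH (frontier GN) ≤ dimH (E ∪ (fun y => y + 1) '' E ∪ Q4) :=
        dimH_mono frontier_subset_union
    _ = max (max (dimH E) (dimH ((fun y => y + 1) '' E))) (dimH Q4) := by
        rw [dimH_union, dimH_union]
    _ = ENNReal.ofReal dd := by
        rw [isometry_addOne.dimH_image, dimH_countable countable_Q4, dimH_E_eq]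
        simp
  · rw [← dimH_E_eq]
    exact dimH_mono E_sub_frontier

end GNP

end

theorem dimH_frontier_GN :
    dimH (frontier GN) = ENNReal.ofReal (Real.log 3 / Real.log 4) := by
  exact GNP.dimH_frontier
end
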